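/- arXiv:0804.0645 — 12 statements merged into one kernel-verified Lean document; each statement's English description precedes it below -/
import Mathlib

section
/- For every odd positive integer k, the sum over j from 1 to k-1 of tan²(πj/k) equals k² − k. -/
open Finset Real

lemma esymm_one' (s : Multiset ℝ) : s.esymm 1 = s.sum := by
  simp [Multiset.esymm, Multiset.powersetCard_one, Multiset.map_map, Function.comp]

lemma esymm_two_cons (a : ℝ) (s : Multiset ℝ) :
    (a ::ₘ s).esymm 2 = a * s.sum + s.esymm 2 := by
  rw [Multiset.esymm, Multiset.powersetCard_cons, Multiset.map_add, Multiset.sum_add]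
  rw [show (1+1 : ℕ) = 2 from rfl, ← Multiset.esymm, add_comm]
  congr 1
  rw [← esymm_one' s, Multiset.esymm, ← Multiset.sum_map_mul_left]
  rw [Multiset.map_map]
  apply congrArg
  apply Multiset.map_congr rfl
  intro t _
  simp

lemma sq_sum_multiset (s : Multiset ℝ) :
    (s.map (fun x => x ^ 2)).sum = s.sum ^ 2 - 2 * s.esymm 2 := by
  induction s using Multiset.induction_on with
  | empty => simp [Multiset.esymm, Multiset.powersetCard_zero_right 1]
  | cons a s ih =>
      rw [Multiset.map_cons, Multiset.sum_cons, Multiset.sum_cons, esymm_two_cons, ih]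
      ring

lemma im_pow_eq (x : ℝ) (k : ℕ) (hc : Real.cos x ≠ 0) :
    (((1 : ℂ) + Real.tan x * Complex.I) ^ k).im = Real.sin (k * x) / (Real.cos x) ^ k := by
  have hc' : (Real.cos x : ℂ) ≠ 0 := by exact_mod_cast hc
  have h1 : ((1 : ℂ) + Real.tan x * Complex.I) * (Real.cos x : ℂ) = Complex.exp (x * Complex.I) := by
    rw [Complex.exp_mul_I, ← Complex.ofReal_cos, ← Complex.ofReal_sin,
      Real.tan_eq_sin_div_cos, Complex.ofReal_div, add_mul, one_mul, mul_right_comm,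
      div_mul_cancel₀ _ hc']
  have h2 : ((1 : ℂ) + Real.tan x * Complex.I) ^ k
      = Complex.exp ((k * x : ℝ) * Complex.I) / ((Real.cos x ^ k : ℝ) : ℂ) := by
    rw [eq_div_iff (by exact_mod_cast pow_ne_zero k hc'), Complex.ofReal_pow, ← mul_pow, h1,
      ← Complex.exp_nat_mul]
    push_cast
    ring_nf
  rw [h2, Complex.div_ofReal_im, Complex.exp_ofReal_mul_I_im]

lemma im_pow_expand (t : ℝ) (k : ℕ) :
    (((1 : ℂ) + t * Complex.I) ^ k).im
      = ∑ n ∈ Finset.range (k + 1), (k.choose n : ℝ) * (Complex.I ^ n).im * t ^ n := by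
  rw [add_comm, add_pow, Complex.im_sum]
  apply Finset.sum_congr rfl
  intro n _
  rw [mul_pow, one_pow, mul_one]
  rw [show ((t : ℂ) ^ n * Complex.I ^ n * (k.choose n : ℕ))
      = ((( (k.choose n : ℝ) * t ^ n : ℝ)) : ℂ) * Complex.I ^ n by push_cast; ring]
  rw [Complex.im_ofReal_mul]
  ring

lemma Iim_even (i : ℕ) : (Complex.I ^ (2*i)).im = 0 := by
  rw [pow_mul, Complex.I_sq]
  rcases Nat.even_or_odd i with h | h
  · rw [h.neg_one_pow]; simp
  · rw [h.neg_one_pow]; simp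

lemma Iim_odd (i : ℕ) : (Complex.I ^ (2*i+1)).im = (-1)^i := by
  rw [pow_succ, pow_mul, Complex.I_sq]
  rcases Nat.even_or_odd i with h | h
  · rw [h.neg_one_pow, h.neg_one_pow]; simp
  · rw [h.neg_one_pow, h.neg_one_pow]; simp

theorem sum_tan_sq (k : ℕ) (hk : Odd k) (hk0 : 0 < k) :
    ∑ j ∈ Finset.Icc 1 (k - 1), Real.tan (π * j / k) ^ 2 = (k : ℝ) ^ 2 - k := by
  obtain ⟨m, hm⟩ := hk
  subst hm
  set k := 2 * m + 1 with hkdef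
  set θ : ℕ → ℝ := fun j => π * j / k with hθ
  set t : ℕ → ℝ := fun j => Real.tan (θ j) with ht
  have hkR : (0:ℝ) < k := by positivity
  have hπ := Real.pi_pos
  have hθnonneg : ∀ j : ℕ, 0 ≤ θ j := by
    intro j
    apply div_nonneg (by positivity) (by positivity)
  have hθlt : ∀ j < k, θ j < π := by
    intro j hj
    have hjk : (j : ℝ) < k := by exact_mod_cast hj
    rw [hθ]
    rw [div_lt_iff₀ hkR]
    nlinarith
  have hθeq : ∀ a b : ℕ, θ a = θ b → a = b := by
    intro a b hab
    have : (a : ℝ) = b := by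
      have hab' : π * a / k = π * b / k := hab
      exact mul_left_cancel₀ hπ.ne' ((div_left_inj' hkR.ne').mp hab')
    exact_mod_cast this
  -- reduced angles in (-π/2, π/2)
  set g : ℕ → ℝ := fun j => if 2 * j < k then θ j else θ j - π with hg
  have hg_mem : ∀ j < k, g j ∈ Set.Ioo (-(π/2)) (π/2) := by
    intro j hj
    have hjk : (j : ℝ) < k := by exact_mod_cast hj
    by_cases h : 2 * j < k
    · have h' : (2 * j : ℝ) < k := by exact_mod_cast h
      simp only [hg, if_pos h]
      constructor
      · have := hθnonneg j; linarith
      · rw [hθ, div_lt_iff₀ hkR]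
        nlinarith
    · have h2 : k < 2 * j := by omega
      have h' : (k : ℝ) < 2 * j := by exact_mod_cast h2
      simp only [hg, if_neg h]
      constructor
      · rw [hθ, lt_sub_iff_add_lt, lt_div_iff₀ hkR]
        nlinarith
      · have := hθlt j hj
        linarith
  have htan_g : ∀ j, Real.tan (g j) = t j := by
    intro j
    by_cases h : 2 * j < k
    · simp only [hg, ht, if_pos h]
    · simp only [hg, if_neg h, ht]
      exact Real.tan_periodic.sub_eq (θ j)
  have hcos : ∀ j < k, Real.cos (θ j) ≠ 0 := by
    intro j hj
    have hgj := hg_mem j hj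
    have hcg : 0 < Real.cos (g j) := Real.cos_pos_of_mem_Ioo hgj
    by_cases h : 2 * j < k
    · simp only [hg, if_pos h] at hcg; exact ne_of_gt hcg
    · simp only [hg, if_neg h] at hcg
      rw [Real.cos_sub_pi] at hcg
      intro hc0
      rw [hc0] at hcg
      norm_num at hcg
  -- injectivity
  have hinj : ∀ i < k, ∀ j < k, t i = t j → i = j := by
    intro i hi j hj hij
    have h1 : g i = g j := by
      apply Real.injOn_tan (hg_mem i hi) (hg_mem j hj)
      rw [htan_g, htan_g, hij]
    by_cases h : 2 * i < k <;> by_cases h' : 2 * j < k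
    · simp only [hg, if_pos h, if_pos h'] at h1; exact hθeq i j h1
    · simp only [hg, if_pos h, if_neg h'] at h1
      exfalso
      have := hθnonneg i
      have := hθlt j hj
      linarith
    · simp only [hg, if_neg h, if_pos h'] at h1
      exfalso
      have := hθnonneg j
      have := hθlt i hi
      linarith
    · simp only [hg, if_neg h, if_neg h'] at h1
      apply hθeq i j
      linarith
  -- the polynomial
  set a : ℕ → ℝ := fun n => (k.choose n : ℝ) * (Complex.I ^ n).im with ha
  set P : Polynomial ℝ := ∑ n ∈ Finset.range (k + 1), Polynomial.C (a n) * Polynomial.X ^ n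
    with hP
  have hcoeff : ∀ i, P.coeff i = if i ≤ k then a i else 0 := by
    intro i
    rw [hP, Polynomial.finset_sum_coeff]
    simp only [Polynomial.coeff_C_mul, Polynomial.coeff_X_pow, mul_ite, mul_one, mul_zero]
    rw [Finset.sum_ite_eq (Finset.range (k+1)) i a]
    simp [Nat.lt_succ_iff]
  have hak : a k = (-1)^m := by
    simp only [ha, hkdef, Nat.choose_self, Nat.cast_one, one_mul]
    exact Iim_odd m
  have hak0 : a k ≠ 0 := by
    rw [hak]
    positivity
  have hdeg : P.natDegree = k := by
    apply le_antisymm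
    · rw [Polynomial.natDegree_le_iff_coeff_eq_zero]
      intro i hi
      rw [hcoeff, if_neg (by omega)]
    · apply Polynomial.le_natDegree_of_ne_zero
      rw [hcoeff, if_pos le_rfl]
      exact hak0
  have hP0 : P ≠ 0 := fun h => hak0 (by
    have hc := hcoeff k
    rw [h, Polynomial.coeff_zero, if_pos le_rfl] at hc
    exact hc.symm)
  have heval : ∀ x : ℝ, P.eval x = ∑ n ∈ Finset.range (k + 1), a n * x ^ n := by
    intro x
    rw [hP, Polynomial.eval_finset_sum]
    simp
  -- roots
  have hroot : ∀ j < k, P.eval (t j) = 0 := by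
    intro j hj
    rw [heval]
    have hexp := im_pow_expand (t j) k
    simp only [ha]
    rw [← hexp, ht, im_pow_eq (θ j) k (hcos j hj)]
    have hkx : (k : ℝ) * θ j = π * j := by
      rw [hθ]
      field_simp
    rw [hkx, mul_comm π (j:ℝ), Real.sin_nat_mul_pi, zero_div]
  set R : Multiset ℝ := (Finset.range k).val.map t with hR
  have hRcard : Multiset.card R = k := by simp [hR]
  have hRnodup : R.Nodup := by
    apply Multiset.Nodup.map_on _ (Finset.range k).nodup
    intro x hx y hy hxy
    exact hinj x (Finset.mem_range.mp hx) y (Finset.mem_range.mp hy) hxy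
  have hRle : R ≤ P.roots := by
    rw [Multiset.le_iff_subset hRnodup]
    intro r hr
    rw [hR, Multiset.mem_map] at hr
    obtain ⟨j, hj, rfl⟩ := hr
    rw [Polynomial.mem_roots hP0]
    exact hroot j (Finset.mem_range.mp (Finset.mem_def.mpr hj))
  have hRroots : R = P.roots := by
    apply Multiset.eq_of_le_of_card_le hRle
    rw [hRcard]
    calc Multiset.card P.roots ≤ P.natDegree := P.card_roots'
      _ = k := hdeg
  have hrootscard : Multiset.card P.roots = P.natDegree := by
    rw [← hRroots, hRcard, hdeg]
  have hlead : P.leadingCoeff = (-1)^m := by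
    rw [Polynomial.leadingCoeff, hdeg, hcoeff, if_pos le_rfl, hak]
  have hm0 : ((-1:ℝ))^m ≠ 0 := by positivity
  have hsq : ((-1:ℝ))^m * (-1)^m = 1 := by
    rw [← pow_add]
    exact Even.neg_one_pow ⟨m, rfl⟩
  -- Vieta
  have hV1 := Polynomial.coeff_eq_esymm_roots_of_card hrootscard (k := k - 1)
    (by rw [hdeg]; omega)
  have hV2 := Polynomial.coeff_eq_esymm_roots_of_card hrootscard (k := k - 2)
    (by rw [hdeg]; omega)
  rw [hdeg, hlead, ← hRroots, hcoeff] at hV1 hV2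
  have hsum0 : R.sum = 0 := by
    have h1 : k - (k - 1) = 1 := by omega
    rw [h1, if_pos (by omega), esymm_one'] at hV1
    have hak1 : a (k - 1) = 0 := by
      have hkm : k - 1 = 2 * m := by omega
      simp only [ha, hkm, Iim_even, mul_zero]
    rw [hak1] at hV1
    have h' := hV1.symm
    rcases mul_eq_zero.mp h' with h2 | h2
    · exfalso
      rcases mul_eq_zero.mp h2 with h3 | h3
      · exact hm0 h3
      · norm_num at h3
    · exact h2
  -- case m = 0
  rcases Nat.eq_zero_or_pos m with rfl | hm1
  · norm_num
  have hesymm2 : R.esymm 2 = -((k:ℝ) * ((k:ℝ) - 1) / 2) := by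
    have h2 : k - (k - 2) = 2 := by omega
    rw [h2, if_pos (by omega)] at hV2
    have hak2 : a (k - 2) = -((-1:ℝ))^m * ((k:ℝ) * ((k:ℝ)-1) / 2) := by
      have hkm : k - 2 = 2 * (m - 1) + 1 := by omega
      simp only [ha, hkm, Iim_odd]
      have hch : (k.choose (2 * (m - 1) + 1) : ℝ) = (k:ℝ) * ((k:ℝ) - 1) / 2 := by
        have he : k.choose (2 * (m-1) + 1) = k.choose 2 := by
          rw [show 2*(m-1)+1 = k - 2 by omega, Nat.choose_symm (by omega)]
        rw [he, Nat.choose_two_right]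
        have h2d : (k * (k - 1) / 2 : ℕ) * 2 = k * (k-1) := by
          apply Nat.div_mul_cancel
          rw [show k - 1 = 2 * m by omega]
          exact ⟨k * m, by ring⟩
        have hcast : ((k * (k - 1) / 2 : ℕ) : ℝ) * 2 = (k : ℝ) * ((k:ℝ) - 1) := by
          rw [show ((2:ℝ)) = ((2:ℕ):ℝ) by norm_num, ← Nat.cast_mul, h2d]
          have : ((k - 1 : ℕ) : ℝ) = (k:ℝ) - 1 := by
            rw [Nat.cast_sub (by omega)]; norm_num
          rw [Nat.cast_mul, this]
        linarith
      rw [hch]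
      have hsg : ((-1:ℝ))^(m-1) = -((-1:ℝ))^m := by
        have : m = (m-1) + 1 := by omega
        rw [this, pow_succ, show m - 1 + 1 - 1 = m - 1 by omega]
        ring
      rw [hsg]
      ring
    rw [hak2, show ((-1:ℝ))^2 = 1 by norm_num, mul_one] at hV2
    calc R.esymm 2 = ((-1:ℝ)^m * (-1)^m) * R.esymm 2 := by rw [hsq]; ring
      _ = (-1:ℝ)^m * ((-1:ℝ)^m * R.esymm 2) := by ring
      _ = (-1:ℝ)^m * (-((-1:ℝ))^m * ((k:ℝ) * ((k:ℝ)-1) / 2)) := by rw [← hV2]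
      _ = -(((-1:ℝ)^m * (-1)^m)) * ((k:ℝ) * ((k:ℝ)-1) / 2) := by ring
      _ = -((k:ℝ) * ((k:ℝ) - 1) / 2) := by rw [hsq]; ring
  -- final computation
  have hfin : (R.map (fun x => x ^ 2)).sum = (k:ℝ)^2 - k := by
    rw [sq_sum_multiset, hsum0, hesymm2]
    ring
  have hsum_range : (R.map (fun x => x ^ 2)).sum = ∑ j ∈ Finset.range k, t j ^ 2 := by
    rw [hR, Multiset.map_map]
    rfl
  have hIcc : Finset.Icc 1 (k - 1) = (Finset.range k).erase 0 := by
    ext j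
    simp only [Finset.mem_Icc, Finset.mem_erase, Finset.mem_range]
    omega
  have ht0 : t 0 ^ 2 = 0 := by
    simp [ht, hθ]
  calc ∑ j ∈ Finset.Icc 1 (k - 1), Real.tan (π * j / k) ^ 2
      = ∑ j ∈ (Finset.range k).erase 0, t j ^ 2 := by rw [hIcc]
    _ = ∑ j ∈ Finset.range k, t j ^ 2 := Finset.sum_erase _ ht0
    _ = (k:ℝ)^2 - k := by rw [← hsum_range, hfin]
end

section
/- For every integer k ≥ 2, the sum over j from 1 to k-1 of cot²(πj/k) equals (k−1)(k−2)/3. -/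
open Finset Real

namespace SumCotSq
open Complex

theorem sumId (n : ℕ) : ∑ m ∈ range n, (m:ℂ) = n*(n-1)/2 := by
  induction n with
  | zero => simp
  | succ p ih => rw [Finset.sum_range_succ, ih]; push_cast; ring

theorem sumSq (n : ℕ) : ∑ m ∈ range n, (m:ℂ)^2 = n*(n-1)*(2*n-1)/6 := by
  induction n with
  | zero => simp
  | succ p ih => rw [Finset.sum_range_succ, ih]; push_cast; ring

theorem geo_zero (k : ℕ) (z : ℂ) (hz : z ^ k = 1) (h1 : z ≠ 1) :
    ∑ m ∈ range k, z ^ m = 0 := by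
  rw [geom_sum_eq h1, hz, sub_self, zero_div]

theorem shift_sum (k : ℕ) (z : ℂ) :
    ∑ m ∈ range k, ((m : ℂ) + 1) * z ^ (m + 1)
      = ∑ m ∈ range k, (m : ℂ) * z ^ m + k * z ^ k := by
  induction k with
  | zero => simp
  | succ n ih =>
      rw [Finset.sum_range_succ, ih, Finset.sum_range_succ]
      push_cast; ring

theorem key (k : ℕ) (z : ℂ) (hz : z ^ k = 1) (h1 : z ≠ 1) :
    (z - 1) * ∑ m ∈ range k, (m : ℂ) * z ^ m = k := by
  have hg := geo_zero k z hz h1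
  have h3 : (z - 1) * ∑ m ∈ range k, (m : ℂ) * z ^ m
      = ∑ m ∈ range k, ((m : ℂ) + 1) * z ^ (m + 1)
        - z * ∑ m ∈ range k, z ^ m - ∑ m ∈ range k, (m : ℂ) * z ^ m := by
    rw [Finset.mul_sum, Finset.mul_sum, ← Finset.sum_sub_distrib, ← Finset.sum_sub_distrib]
    exact Finset.sum_congr rfl fun m _ => by ring
  rw [h3, shift_sum, hg, hz]; ring

noncomputable def fc (k : ℕ) (z : ℂ) : ℂ := ∑ m ∈ range k, (2*(m:ℂ)+1-k) * z^m

theorem fc_one (k : ℕ) : fc k 1 = 0 := by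
  unfold fc
  simp only [one_pow, mul_one]
  rw [Finset.sum_sub_distrib, Finset.sum_add_distrib, ← Finset.mul_sum, sumId,
    Finset.sum_const, Finset.sum_const, Finset.card_range]
  ring

theorem fc_key (k : ℕ) (z : ℂ) (hz : z ^ k = 1) (h1 : z ≠ 1) :
    (z - 1) * fc k z = 2 * k := by
  have hg := geo_zero k z hz h1
  have hk := key k z hz h1
  have h : fc k z = 2 * ∑ m ∈ range k, (m:ℂ) * z^m + (1 - (k:ℂ)) * ∑ m ∈ range k, z^m := by
    unfold fc
    rw [Finset.mul_sum, Finset.mul_sum, ← Finset.sum_add_distrib]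
    exact Finset.sum_congr rfl fun m _ => by ring
  rw [h, hg]
  linear_combination 2 * hk

theorem zeta_pow_k (k : ℕ) (hk : 0 < k) :
    (Complex.exp (2 * Real.pi * I / k)) ^ k = 1 := by
  rw [← Complex.exp_nat_mul]
  have hkc : (k:ℂ) ≠ 0 := Nat.cast_ne_zero.mpr hk.ne'
  rw [show (k:ℂ) * (2 * Real.pi * I / k) = 2 * Real.pi * I by field_simp]
  exact Complex.exp_two_pi_mul_I

theorem zeta_pow_ne_one (k m : ℕ) (hk : 0 < k) (hm : ¬ k ∣ m) :
    (Complex.exp (2 * Real.pi * I / k)) ^ m ≠ 1 := by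
  rw [← Complex.exp_nat_mul]
  intro h
  rw [Complex.exp_eq_one_iff] at h
  obtain ⟨n, hn⟩ := h
  have hkc : (k:ℂ) ≠ 0 := Nat.cast_ne_zero.mpr hk.ne'
  have h2 : (2 * (Real.pi:ℂ) * I) ≠ 0 := by
    simp [Real.pi_ne_zero, Complex.I_ne_zero]
  have hdiv : ((m:ℂ)/k) * (2 * (Real.pi:ℂ) * I) = (n:ℂ) * (2 * (Real.pi:ℂ) * I) := by
    field_simp at hn ⊢
    linear_combination hn
  have h3 : (m:ℂ)/k = (n:ℂ) := mul_right_cancel₀ h2 hdiv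
  have hmc : (m:ℂ) = n * k := by field_simp at h3; linear_combination h3
  have hmz : (m:ℤ) = n * k := by exact_mod_cast hmc
  exact hm (Int.ofNat_dvd.mp ⟨n, by rw [hmz, mul_comm]⟩)

theorem Ek (k t : ℕ) (hk : 0 < k) :
    ∑ j ∈ range k, ((Complex.exp (2 * Real.pi * I / k)) ^ t) ^ j
      = if k ∣ t then (k:ℂ) else 0 := by
  by_cases h : k ∣ t
  · rw [if_pos h]
    obtain ⟨q, rfl⟩ := h
    rw [pow_mul, zeta_pow_k k hk, one_pow]
    simp
  · rw [if_neg h]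
    apply geo_zero
    · rw [pow_right_comm, zeta_pow_k k hk, one_pow]
    · exact zeta_pow_ne_one k t hk h

theorem not_dvd_aux (k m n : ℕ) (hm : m < k) (hn : n < k) (hne : m + n ≠ 0)
    (hnek : m + n ≠ k) : ¬ k ∣ (m + n) := by
  intro hd
  obtain ⟨q, hq⟩ := hd
  rcases q with _ | _ | q
  · omega
  · omega
  · rw [Nat.mul_succ, Nat.mul_succ] at hq
    omega

theorem innerSumC (k m : ℕ) (hk : 0 < k) (hm : m < k) :
    ∑ n ∈ range k, (2*(n:ℂ)+1-k) * (if k ∣ (m+n) then (k:ℂ) else 0)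
      = (2*(((k-m) % k : ℕ):ℂ)+1-k) * k := by
  rcases Nat.eq_zero_or_pos m with rfl | hm0
  · rw [show (k - 0) % k = 0 by simp]
    rw [Finset.sum_eq_single_of_mem 0 (Finset.mem_range.mpr hk)]
    · simp
    · intro n hn hne
      have h1 : n < k := Finset.mem_range.mp hn
      have h2 : 0 + n ≠ 0 := by omega
      have h3 : 0 + n ≠ k := by omega
      rw [if_neg (not_dvd_aux k 0 n hm h1 h2 h3), mul_zero]
  · rw [show (k - m) % k = k - m from Nat.mod_eq_of_lt (by omega)]
    rw [Finset.sum_eq_single_of_mem (k - m) (Finset.mem_range.mpr (by omega))]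
    · rw [if_pos (by rw [show m + (k - m) = k by omega])]
    · intro n hn hne
      have h1 : n < k := Finset.mem_range.mp hn
      have h2 : m + n ≠ 0 := by omega
      have h3 : m + n ≠ k := by omega
      rw [if_neg (not_dvd_aux k m n hm h1 h2 h3), mul_zero]

theorem cot_exp (θ : ℝ) (hs : Real.sin θ ≠ 0) :
    ((Real.cos θ / Real.sin θ : ℝ) : ℂ) * (1 - Complex.exp (2 * θ * I))
      = -I * (1 + Complex.exp (2 * θ * I)) := by
  have hz : Complex.exp (2 * θ * I) = Complex.cos (2*θ) + Complex.sin (2*θ) * I := by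
    rw [← Complex.exp_mul_I]
  rw [hz]
  have h1 : (Complex.cos (2*(θ:ℂ))) = ((Real.cos (2*θ) : ℝ) : ℂ) := by
    push_cast [Complex.ofReal_cos]; norm_num
  have h2 : (Complex.sin (2*(θ:ℂ))) = ((Real.sin (2*θ) : ℝ) : ℂ) := by
    push_cast [Complex.ofReal_sin]; norm_num
  rw [h1, h2, Real.cos_two_mul', Real.sin_two_mul]
  push_cast
  have hsc : Complex.sin (θ:ℂ) ≠ 0 := by
    rw [← Complex.ofReal_sin]; exact_mod_cast hs
  field_simp
  linear_combination (-Complex.cos ↑θ - Complex.sin ↑θ * I) * Complex.sin_sq_add_cos_sq (θ:ℂ)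
    + (2 * Complex.cos ↑θ * Complex.sin ↑θ^2) * Complex.I_sq

theorem Csum (k : ℕ) (hk : 2 ≤ k) :
    ∑ m ∈ range k, (2*(m:ℂ)+1-k) * ((2*(((k-m) % k : ℕ):ℂ)+1-k) * k)
      = (1-(k:ℂ))^2*k + ((k:ℂ)-1)*k - (k:ℂ)^2*((k:ℂ)-1)*((k:ℂ)-2)/3 := by
  have hk0 : 0 < k := by omega
  rw [Finset.range_eq_Ico, Finset.sum_eq_sum_Ico_succ_bot hk0]
  have hmid : ∑ m ∈ Finset.Ico 1 k, (2*(m:ℂ)+1-k) * ((2*(((k-m) % k : ℕ):ℂ)+1-k) * k)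
      = ∑ m ∈ Finset.Ico 1 k,
          ((-4*(k:ℂ))*(m:ℂ)^2 + (4*(k:ℂ)^2)*(m:ℂ) + ((k:ℂ)*(1-(k:ℂ)^2))) := by
    refine Finset.sum_congr rfl fun m hm => ?_
    obtain ⟨hm1, hm2⟩ := Finset.mem_Ico.mp hm
    rw [show (k - m) % k = k - m from Nat.mod_eq_of_lt (by omega)]
    rw [Nat.cast_sub (by omega : m ≤ k)]
    ring
  rw [hmid]
  have hIco : ∑ m ∈ Finset.Ico 1 k,
        ((-4*(k:ℂ))*(m:ℂ)^2 + (4*(k:ℂ)^2)*(m:ℂ) + ((k:ℂ)*(1-(k:ℂ)^2)))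
      = ∑ m ∈ range k,
        ((-4*(k:ℂ))*(m:ℂ)^2 + (4*(k:ℂ)^2)*(m:ℂ) + ((k:ℂ)*(1-(k:ℂ)^2)))
        - ((-4*(k:ℂ))*((0:ℕ):ℂ)^2 + (4*(k:ℂ)^2)*((0:ℕ):ℂ) + ((k:ℂ)*(1-(k:ℂ)^2))) := by
    rw [Finset.range_eq_Ico, Finset.sum_eq_sum_Ico_succ_bot hk0]
    ring
  rw [hIco]
  rw [Finset.sum_add_distrib, Finset.sum_add_distrib, ← Finset.mul_sum, ← Finset.mul_sum,
    sumSq, sumId, Finset.sum_const, Finset.card_range, nsmul_eq_mul]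
  simp only [Nat.sub_zero, Nat.mod_self, Nat.cast_zero]
  push_cast
  ring

end SumCotSq

open SumCotSq Complex in
theorem sum_cot_sq (k : ℕ) (hk : 2 ≤ k) :
    ∑ j ∈ Finset.Icc 1 (k - 1),
      (Real.cos (π * j / k) / Real.sin (π * j / k)) ^ 2 =
    ((k : ℝ) - 1) * ((k : ℝ) - 2) / 3 := by
  have hk0 : 0 < k := by omega
  have hkc : (k:ℂ) ≠ 0 := Nat.cast_ne_zero.mpr hk0.ne'
  set ζ : ℂ := Complex.exp (2 * Real.pi * I / k) with hζ
  -- per-term identity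
  have hterm : ∀ j ∈ Finset.Icc 1 (k-1),
      ((((Real.cos (π * j / k) / Real.sin (π * j / k)) ^ 2 : ℝ)) : ℂ) * (k:ℂ)^2
        = -((k:ℂ) + fc k (ζ^j))^2 := by
    intro j hj
    obtain ⟨hj1, hj2⟩ := Finset.mem_Icc.mp hj
    have hjk : j < k := by omega
    have hnd : ¬ k ∣ j := by
      intro h
      have := Nat.le_of_dvd (by omega) h
      omega
    have hzne : ζ^j ≠ 1 := zeta_pow_ne_one k j hk0 hnd
    have hzk1 : (ζ^j)^k = 1 := by rw [pow_right_comm, zeta_pow_k k hk0, one_pow]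
    set θ : ℝ := π * j / k with hθ
    have hθpos : 0 < θ := by
      apply div_pos (mul_pos Real.pi_pos (by exact_mod_cast hj1 : (0:ℝ) < j))
      exact_mod_cast hk0
    have hθlt : θ < π := by
      rw [hθ, div_lt_iff₀ (by exact_mod_cast hk0 : (0:ℝ) < k)]
      have : (j:ℝ) < k := by exact_mod_cast hjk
      nlinarith [Real.pi_pos]
    have hsin : Real.sin θ ≠ 0 := (Real.sin_pos_of_pos_of_lt_pi hθpos hθlt).ne'
    have hexp : Complex.exp (2 * (θ:ℝ) * I) = ζ^j := by
      rw [hζ, ← Complex.exp_nat_mul]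
      congr 1
      push_cast [hθ]
      field_simp
    have hc := cot_exp θ hsin
    rw [hexp] at hc
    have hf := fc_key k (ζ^j) hzk1 hzne
    have h1z : (1:ℂ) - ζ^j ≠ 0 := sub_ne_zero.mpr (Ne.symm hzne)
    have hcotk : ((Real.cos θ / Real.sin θ : ℝ) : ℂ) * k = I * ((k:ℂ) + fc k (ζ^j)) := by
      apply mul_right_cancel₀ h1z
      linear_combination (k:ℂ) * hc + I * hf
    rw [Complex.ofReal_div] at hcotk
    rw [Complex.ofReal_pow, Complex.ofReal_div]
    linear_combination (((Real.cos θ : ℝ):ℂ) / ((Real.sin θ : ℝ):ℂ) * k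
        + I * ((k:ℂ) + fc k (ζ^j))) * hcotk
      + ((k:ℂ) + fc k (ζ^j))^2 * Complex.I_sq
  -- sum of f over all j in range k
  have hA : ∑ j ∈ range k, fc k (ζ^j) = (1-(k:ℂ))*k := by
    have h1 : ∀ j, fc k (ζ^j) = ∑ m ∈ range k, (2*(m:ℂ)+1-k) * (ζ^m)^j := by
      intro j; unfold fc
      exact Finset.sum_congr rfl fun m _ => by rw [pow_right_comm]
    calc ∑ j ∈ range k, fc k (ζ^j)
        = ∑ j ∈ range k, ∑ m ∈ range k, (2*(m:ℂ)+1-k) * (ζ^m)^j :=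
          Finset.sum_congr rfl fun j _ => h1 j
      _ = ∑ m ∈ range k, ∑ j ∈ range k, (2*(m:ℂ)+1-k) * (ζ^m)^j := Finset.sum_comm
      _ = ∑ m ∈ range k, (2*(m:ℂ)+1-k) * (if k ∣ m then (k:ℂ) else 0) := by
          refine Finset.sum_congr rfl fun m _ => ?_
          rw [← Finset.mul_sum, Ek k m hk0]
      _ = (1-(k:ℂ))*k := by
          rw [Finset.sum_eq_single_of_mem 0 (Finset.mem_range.mpr hk0)]
          · rw [if_pos (dvd_zero k)]; push_cast; ring
          · intro m hm hne
            rw [if_neg (fun h => hne (Nat.eq_zero_of_dvd_of_lt h (Finset.mem_range.mp hm))),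
              mul_zero]
  -- sum of f^2 over all j in range k
  have hB : ∑ j ∈ range k, (fc k (ζ^j))^2
      = ∑ m ∈ range k, (2*(m:ℂ)+1-k) * ((2*(((k-m) % k : ℕ):ℂ)+1-k) * k) := by
    have hsq : ∀ j, (fc k (ζ^j))^2
        = ∑ m ∈ range k, ∑ n ∈ range k,
            ((2*(m:ℂ)+1-k)*(2*(n:ℂ)+1-k)) * (ζ^(m+n))^j := by
      intro j; unfold fc
      rw [sq, Finset.sum_mul_sum]
      refine Finset.sum_congr rfl fun m _ => Finset.sum_congr rfl fun n _ => ?_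
      rw [pow_add, mul_pow, pow_right_comm ζ m j, pow_right_comm ζ n j]
      ring
    calc ∑ j ∈ range k, (fc k (ζ^j))^2
        = ∑ j ∈ range k, ∑ m ∈ range k, ∑ n ∈ range k,
            ((2*(m:ℂ)+1-k)*(2*(n:ℂ)+1-k)) * (ζ^(m+n))^j :=
          Finset.sum_congr rfl fun j _ => hsq j
      _ = ∑ m ∈ range k, ∑ j ∈ range k, ∑ n ∈ range k,
            ((2*(m:ℂ)+1-k)*(2*(n:ℂ)+1-k)) * (ζ^(m+n))^j := Finset.sum_comm
      _ = ∑ m ∈ range k, ∑ n ∈ range k, ∑ j ∈ range k,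
            ((2*(m:ℂ)+1-k)*(2*(n:ℂ)+1-k)) * (ζ^(m+n))^j :=
          Finset.sum_congr rfl fun m _ => Finset.sum_comm
      _ = ∑ m ∈ range k, ∑ n ∈ range k,
            ((2*(m:ℂ)+1-k)*(2*(n:ℂ)+1-k)) * (if k ∣ (m+n) then (k:ℂ) else 0) := by
          refine Finset.sum_congr rfl fun m _ => Finset.sum_congr rfl fun n _ => ?_
          rw [← Finset.mul_sum, Ek k (m+n) hk0]
      _ = ∑ m ∈ range k, (2*(m:ℂ)+1-k) * ((2*(((k-m) % k : ℕ):ℂ)+1-k) * k) := by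
          refine Finset.sum_congr rfl fun m hm => ?_
          rw [← innerSumC k m hk0 (Finset.mem_range.mp hm), Finset.mul_sum]
          exact Finset.sum_congr rfl fun n _ => by ring
  -- total T over Icc 1 (k-1)
  have hT : ∑ j ∈ Finset.Icc 1 (k-1), ((k:ℂ) + fc k (ζ^j))^2
      = -(k:ℂ)^2*((k:ℂ)-1)*((k:ℂ)-2)/3 := by
    have hIcc : Finset.Icc 1 (k-1) = Finset.Ico 1 k := by
      rw [← Finset.Ico_add_one_right_eq_Icc]
      congr 1
      omega
    have hsplit : ∑ j ∈ range k, ((k:ℂ) + fc k (ζ^j))^2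
        = ((k:ℂ) + fc k (ζ^0))^2 + ∑ j ∈ Finset.Ico 1 k, ((k:ℂ) + fc k (ζ^j))^2 := by
      rw [Finset.range_eq_Ico, Finset.sum_eq_sum_Ico_succ_bot hk0]
    have hexpand : ∑ j ∈ range k, ((k:ℂ) + fc k (ζ^j))^2
        = (k:ℂ)^2 * k + 2*(k:ℂ) * ∑ j ∈ range k, fc k (ζ^j)
          + ∑ j ∈ range k, (fc k (ζ^j))^2 := by
      have : ∀ j, ((k:ℂ) + fc k (ζ^j))^2
          = (k:ℂ)^2 + 2*(k:ℂ) * fc k (ζ^j) + (fc k (ζ^j))^2 := fun j => by ring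
      rw [Finset.sum_congr rfl fun j _ => this j, Finset.sum_add_distrib,
        Finset.sum_add_distrib, Finset.sum_const, Finset.card_range, nsmul_eq_mul,
        ← Finset.mul_sum]
      ring
    have h0 : ((k:ℂ) + fc k (ζ^0))^2 = (k:ℂ)^2 := by
      rw [pow_zero, fc_one]; ring
    rw [hIcc]
    have := hsplit
    rw [hexpand, h0] at this
    have hval : ∑ j ∈ Finset.Ico 1 k, ((k:ℂ) + fc k (ζ^j))^2
        = (k:ℂ)^2 * k + 2*(k:ℂ) * ((1-(k:ℂ))*k)
          + ((1-(k:ℂ))^2*k + ((k:ℂ)-1)*k - (k:ℂ)^2*((k:ℂ)-1)*((k:ℂ)-2)/3) - (k:ℂ)^2 := by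
      rw [← hA, ← Csum k hk, ← hB]
      linear_combination -this
    rw [hval]
    ring
  -- final assembly
  have h1 : ((∑ j ∈ Finset.Icc 1 (k-1),
        (Real.cos (π * j / k) / Real.sin (π * j / k)) ^ 2 : ℝ) : ℂ) * (k:ℂ)^2
      = -∑ j ∈ Finset.Icc 1 (k-1), ((k:ℂ) + fc k (ζ^j))^2 := by
    rw [Complex.ofReal_sum, Finset.sum_mul, ← Finset.sum_neg_distrib]
    exact Finset.sum_congr rfl fun j hj => by rw [← hterm j hj]
  rw [hT] at h1
  have h2 : ((∑ j ∈ Finset.Icc 1 (k-1),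
        (Real.cos (π * j / k) / Real.sin (π * j / k)) ^ 2 : ℝ) : ℂ)
      = ((((k:ℝ)-1)*((k:ℝ)-2)/3 : ℝ) : ℂ) := by
    apply mul_right_cancel₀ (pow_ne_zero 2 hkc)
    rw [h1]
    push_cast
    ring
  exact_mod_cast h2
end

section
/- For every odd positive integer k ≥ 3, the sum over j from 1 to k-1 of csc²(2πj/k) equals (k² − 1)/3. -/
open Finset Real

lemma aux_tele (z : ℂ) (n : ℕ) :
    (z - 1) * ∑ i ∈ range n, (i:ℂ) * z ^ i
      = ((n:ℂ) - 1) * z ^ n - ∑ i ∈ range n, z ^ i + 1 := by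
  induction n with
  | zero => simp
  | succ n ih =>
    rw [Finset.sum_range_succ, Finset.sum_range_succ, mul_add]
    rw [ih]; push_cast; ring

lemma aux_gaussA (n : ℕ) : ∑ i ∈ range n, (i:ℂ) = n * (n - 1) / 2 := by
  induction n with
  | zero => simp
  | succ n ih => rw [Finset.sum_range_succ, ih]; push_cast; ring

lemma aux_gaussB (n : ℕ) : ∑ i ∈ range n, (i:ℂ)^2 = n * (n - 1) * (2*n - 1) / 6 := by
  induction n with
  | zero => simp
  | succ n ih => rw [Finset.sum_range_succ, ih]; push_cast; ring

lemma aux_key (k : ℕ) (z : ℂ) (h1 : z ^ k = 1) (h2 : z ≠ 1) :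
    (z - 1) * ∑ i ∈ range k, (i:ℂ) * z ^ i = k := by
  have hg : ∑ i ∈ range k, z ^ i = 0 := by
    rw [geom_sum_eq h2, h1]; simp
  rw [aux_tele, hg, h1]; ring

lemma aux_geo (k : ℕ) (ζ : ℂ) (hζ : IsPrimitiveRoot ζ k) (m : ℕ) :
    ∑ j ∈ range k, (ζ ^ m) ^ j = if k ∣ m then (k:ℂ) else 0 := by
  by_cases h : k ∣ m
  · have : ζ ^ m = 1 := by
      obtain ⟨c, rfl⟩ := h
      rw [pow_mul, hζ.pow_eq_one, one_pow]
    simp [this, h]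
  · have hne : ζ ^ m ≠ 1 := fun hh => h ((hζ.pow_eq_one_iff_dvd m).mp hh)
    rw [geom_sum_eq hne]
    rw [← pow_mul, mul_comm, pow_mul, hζ.pow_eq_one, one_pow]
    simp [h]

lemma aux_geoIcc (k : ℕ) (hk : k ≠ 0) (ζ : ℂ) (hζ : IsPrimitiveRoot ζ k) (m : ℕ) :
    ∑ j ∈ Icc 1 (k-1), (ζ ^ m) ^ j = (if k ∣ m then (k:ℂ) else 0) - 1 := by
  have hr : range k = insert 0 (Icc 1 (k-1)) := by
    ext x; simp [Finset.mem_range, Finset.mem_Icc]; omega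
  have h0 : (0:ℕ) ∉ Icc 1 (k-1) := by simp
  have := aux_geo k ζ hζ m
  rw [hr, Finset.sum_insert h0] at this
  simp only [pow_zero] at this
  linear_combination this

lemma aux_sin_sq (t : ℂ) :
    Complex.sin t ^ 2
      = -(Complex.exp (t*Complex.I) ^ 2 - 1)^2 / (4 * Complex.exp (t*Complex.I) ^ 2) := by
  have he : Complex.exp (t*Complex.I) ≠ 0 := Complex.exp_ne_zero _
  rw [Complex.sin, neg_mul, Complex.exp_neg]
  field_simp
  ring_nf
  simp only [Complex.I_sq]
  ring

theorem sum_csc_sq (k : ℕ) (hk : Odd k) (hk3 : 3 ≤ k) :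
    ∑ j ∈ Finset.Icc 1 (k - 1), (1 / Real.sin (2 * π * j / k)) ^ 2 =
    ((k : ℝ) ^ 2 - 1) / 3 := by
  have hk0 : k ≠ 0 := by omega
  have hkC : (k:ℂ) ≠ 0 := Nat.cast_ne_zero.mpr hk0
  set ζ : ℂ := Complex.exp (2 * (π:ℂ) * Complex.I / k) with hζdef
  have hζ : IsPrimitiveRoot ζ k := Complex.isPrimitiveRoot_exp k hk0
  have hcop : Nat.Coprime k 2 := hk.coprime_two_right
  set c : ℂ := (-4) / (k:ℂ)^2 with hcdef
  -- divisibility criterion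
  have hdvd : ∀ i ∈ range k, ∀ i' ∈ range k,
      (k ∣ 2*(1+i+i')) ↔ 1+i+i' = k := by
    intro i hi i' hi'
    rw [Finset.mem_range] at hi hi'
    constructor
    · intro h
      have h2 : k ∣ (1+i+i') := (hcop.dvd_mul_left).mp h
      obtain ⟨cc, hcc⟩ := h2
      rcases cc with _ | _ | cc
      · omega
      · omega
      · have : k * 2 ≤ k * (cc+1+1) := Nat.mul_le_mul_left k (by omega)
        omega
    · intro h; exact ⟨2, by omega⟩
  -- main per-term identity
  have hterm : ∀ j ∈ Icc 1 (k-1),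
      (1 / Complex.sin (2 * (π:ℂ) * j / k)) ^ 2
        = ∑ i ∈ range k, ∑ i' ∈ range k,
            (i:ℂ) * (i':ℂ) * c * (ζ^(2*(1+i+i')))^j := by
    intro j hj
    rw [Finset.mem_Icc] at hj
    set w : ℂ := ζ^(2*j) with hwdef
    have hwk : w ^ k = 1 := by
      rw [hwdef, ← pow_mul, mul_comm, pow_mul, hζ.pow_eq_one, one_pow]
    have hwne1 : w ≠ 1 := by
      intro h
      have hd : k ∣ 2*j := (hζ.pow_eq_one_iff_dvd _).mp h
      have hdj : k ∣ j := (hcop.dvd_mul_left).mp hd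
      have := Nat.le_of_dvd (by omega) hdj
      omega
    have hw0 : w ≠ 0 := pow_ne_zero _ (Complex.exp_ne_zero _)
    have hwm1 : w - 1 ≠ 0 := sub_ne_zero.mpr hwne1
    set S : ℂ := ∑ i ∈ range k, (i:ℂ) * w ^ i with hSdef
    have hS : (w - 1) * S = k := aux_key k w hwk hwne1
    have he : Complex.exp ((2 * (π:ℂ) * j / k) * Complex.I) = ζ ^ j := by
      rw [hζdef, ← Complex.exp_nat_mul]
      congr 1
      ring
    have hzj2 : (ζ ^ j) ^ 2 = w := by rw [hwdef, ← pow_mul, mul_comm]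
    have hsin : Complex.sin (2 * (π:ℂ) * j / k) ^ 2 = -(w - 1)^2 / (4 * w) := by
      rw [aux_sin_sq, he, hzj2]
    -- step 1 : value as -4 w S^2 / k^2
    have hstep1 : (1 / Complex.sin (2 * (π:ℂ) * j / k)) ^ 2 = -4 * w * S^2 / (k:ℂ)^2 := by
      rw [div_pow, one_pow, hsin]
      have hS2 : ((w - 1) * S)^2 = (k:ℂ)^2 := by rw [hS]
      field_simp
      rw [← hS]; ring
    rw [hstep1]
    -- step 2 : expand the square
    rw [sq, hSdef, Finset.sum_mul_sum]
    rw [Finset.mul_sum, Finset.sum_div]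
    refine Finset.sum_congr rfl fun i _ => ?_
    rw [Finset.mul_sum, Finset.sum_div]
    refine Finset.sum_congr rfl fun i' _ => ?_
    have hx : w * w ^ (i+i') = (ζ^(2*(1+i+i')))^j := by
      rw [hwdef, ← pow_succ', ← pow_mul, ← pow_mul]
      congr 1
      ring
    rw [← hx, pow_add, hcdef]
    field_simp
  -- pass to ℂ
  rw [← Complex.ofReal_inj]
  push_cast
  calc (∑ j ∈ Icc 1 (k-1), (1 / Complex.sin (2 * (π:ℂ) * j / k)) ^ 2)
      = ∑ j ∈ Icc 1 (k-1), ∑ i ∈ range k, ∑ i' ∈ range k,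
          (i:ℂ) * (i':ℂ) * c * (ζ^(2*(1+i+i')))^j := Finset.sum_congr rfl hterm
    _ = ∑ i ∈ range k, ∑ i' ∈ range k, ∑ j ∈ Icc 1 (k-1),
          (i:ℂ) * (i':ℂ) * c * (ζ^(2*(1+i+i')))^j := by
        rw [Finset.sum_comm]
        exact Finset.sum_congr rfl fun i _ => Finset.sum_comm
    _ = ∑ i ∈ range k, ∑ i' ∈ range k,
          (i:ℂ) * (i':ℂ) * c * ((if k ∣ 2*(1+i+i') then (k:ℂ) else 0) - 1) := by
        refine Finset.sum_congr rfl fun i _ => Finset.sum_congr rfl fun i' _ => ?_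
        rw [← Finset.mul_sum, aux_geoIcc k hk0 ζ hζ]
    _ = ∑ i ∈ range k,
          ((i:ℂ) * ((k:ℂ) - 1 - i) * c * k - (i:ℂ) * c * ((k:ℂ) * ((k:ℂ)-1) / 2)) := by
        refine Finset.sum_congr rfl fun i hi => ?_
        have hik : i < k := Finset.mem_range.mp hi
        have hsplit : ∀ i' ∈ range k,
            (i:ℂ) * (i':ℂ) * c * ((if k ∣ 2*(1+i+i') then (k:ℂ) else 0) - 1)
              = (if i' = k-1-i then (i:ℂ) * (i':ℂ) * c * (k:ℂ) else 0) - (i:ℂ) * (i':ℂ) * c := by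
          intro i' hi'
          have hi'k : i' < k := Finset.mem_range.mp hi'
          simp only [hdvd i hi i' hi']
          by_cases h : 1+i+i' = k
          · rw [if_pos h, if_pos (show i' = k-1-i by omega)]; ring
          · rw [if_neg h, if_neg (show ¬ i' = k-1-i by omega)]; ring
        rw [Finset.sum_congr rfl hsplit, Finset.sum_sub_distrib,
            Finset.sum_ite_eq' (range k) (k-1-i)]
        have hmem : (k-1-i) ∈ range k := by rw [Finset.mem_range]; omega
        rw [if_pos hmem]
        have hcast : ((k-1-i : ℕ):ℂ) = (k:ℂ) - 1 - (i:ℂ) := by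
          have h1 : (1+i : ℕ) ≤ k := by omega
          rw [Nat.sub_sub, Nat.cast_sub h1]
          push_cast; ring
        rw [hcast]
        have : ∑ i' ∈ range k, (i:ℂ) * (i':ℂ) * c = (i:ℂ) * c * ((k:ℂ) * ((k:ℂ)-1) / 2) := by
          rw [← aux_gaussA k, Finset.mul_sum]
          refine Finset.sum_congr rfl fun i' _ => ?_
          ring
        rw [this]
    _ = ((k:ℂ)^2 - 1) / 3 := by
        have hexp : ∀ i ∈ range k,
            (i:ℂ) * ((k:ℂ) - 1 - i) * c * k - (i:ℂ) * c * ((k:ℂ) * ((k:ℂ)-1) / 2)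
              = (c * (k:ℂ) * ((k:ℂ)-1) - c * ((k:ℂ) * ((k:ℂ)-1) / 2)) * (i:ℂ)
                  - (c * (k:ℂ)) * (i:ℂ)^2 := by
          intro i _; ring
        rw [Finset.sum_congr rfl hexp, Finset.sum_sub_distrib, ← Finset.mul_sum,
            ← Finset.mul_sum, aux_gaussA, aux_gaussB, hcdef]
        field_simp
        ring_nf
end

section
/- For every odd positive integer k ≥ 3, the sum over j from 1 to k-1 of sec²(2πj/k) equals k² − 1. -/
open Finset Real

lemma cos_ne_zero_aux (k : ℕ) (hk : Odd k) (j : ℕ) : Real.cos (2 * π * j / k) ≠ 0 := by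
  have hk0 : (k:ℝ) ≠ 0 := by
    have := hk.pos; positivity
  intro h
  rw [Real.cos_eq_zero_iff] at h
  obtain ⟨n, hn⟩ := h
  have hπ := Real.pi_ne_zero
  have h4 : (4 * j : ℝ) = (2 * n + 1) * k := by
    apply mul_right_cancel₀ hπ
    field_simp at hn
    linear_combination π * hn
  have h4' : (4 * j : ℤ) = (2 * n + 1) * k := by exact_mod_cast h4
  have hodd : Odd ((2 * n + 1) * (k:ℤ)) := (odd_two_mul_add_one n).mul (by exact_mod_cast hk)
  rw [← h4'] at hodd
  obtain ⟨m, hm⟩ := hodd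
  omega

lemma two_exp_cos (θ : ℝ) :
    2 * Complex.exp (θ * Complex.I) * Complex.cos θ = 1 + Complex.exp (2 * θ * Complex.I) := by
  have h := Complex.two_cos (x := (θ:ℂ))
  calc 2 * Complex.exp (θ * Complex.I) * Complex.cos θ
      = Complex.exp (θ * Complex.I) * (2 * Complex.cos θ) := by ring
    _ = Complex.exp (θ * Complex.I) * (Complex.exp (θ * Complex.I) + Complex.exp (-θ * Complex.I)) := by rw [h]
    _ = Complex.exp (θ * Complex.I + θ * Complex.I) + Complex.exp (θ * Complex.I + -θ * Complex.I) := by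
        rw [Complex.exp_add, Complex.exp_add]; ring
    _ = 1 + Complex.exp (2 * θ * Complex.I) := by
        rw [show (θ:ℂ) * Complex.I + -θ * Complex.I = 0 by ring, Complex.exp_zero,
          show (θ:ℂ) * Complex.I + θ * Complex.I = 2 * θ * Complex.I by ring]
        ring

theorem sum_sec_sq (k : ℕ) (hk : Odd k) (hk3 : 3 ≤ k) :
    ∑ j ∈ Finset.Icc 1 (k - 1), (1 / Real.cos (2 * π * j / k)) ^ 2 =
    (k : ℝ) ^ 2 - 1 := by
  have hk0 : k ≠ 0 := by omega
  have hkR : (k:ℝ) ≠ 0 := Nat.cast_ne_zero.mpr hk0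
  set ζ : ℂ := Complex.exp (2 * π * Complex.I / k) with hζdef
  have hζ : IsPrimitiveRoot ζ k := Complex.isPrimitiveRoot_exp k hk0
  have hv : IsPrimitiveRoot (ζ ^ 2) k := hζ.pow_of_coprime 2 (Nat.coprime_two_left.mpr hk)
  set w : ℕ → ℂ := fun j => (ζ ^ 2) ^ j with hwdef
  set A : ℕ → ℂ := fun j => ∑ m ∈ range k, (-(w j)) ^ m with hAdef
  have hwk : ∀ j, (w j) ^ k = 1 := by
    intro j
    show ((ζ ^ 2) ^ j) ^ k = 1
    rw [pow_right_comm, hv.pow_eq_one, one_pow]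
  -- termwise identity
  have hterm : ∀ j ∈ Finset.Icc 1 (k - 1),
      (((1 / Real.cos (2 * π * j / k)) ^ 2 : ℝ) : ℂ) = w j * (A j) ^ 2 := by
    intro j _
    set θ : ℝ := 2 * π * j / k with hθdef
    have hc : Real.cos θ ≠ 0 := cos_ne_zero_aux k hk j
    have hcC : Complex.cos θ ≠ 0 := by
      rw [← Complex.ofReal_cos]
      exact_mod_cast hc
    have hw : w j = Complex.exp (2 * θ * Complex.I) := by
      show (ζ ^ 2) ^ j = _
      rw [← pow_mul, hζdef, ← Complex.exp_nat_mul]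
      rw [hθdef]
      push_cast
      ring
    have h1w : 1 + w j = 2 * Complex.exp (θ * Complex.I) * Complex.cos θ := by
      rw [hw, two_exp_cos]
    have hA : A j * (1 + w j) = 2 := by
      have hg := geom_sum_mul (-(w j)) k
      rw [hk.neg_pow, hwk j] at hg
      show (∑ m ∈ range k, (-(w j)) ^ m) * (1 + w j) = 2
      linear_combination -hg
    have hexp2 : Complex.exp (θ * Complex.I) ^ 2 = w j := by
      rw [hw, sq, ← Complex.exp_add]
      congr 1
      ring
    have hsq : (A j) ^ 2 * (4 * w j * (Complex.cos θ) ^ 2) = 4 := by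
      have h2 : (1 + w j) ^ 2 = 4 * w j * (Complex.cos θ) ^ 2 := by
        rw [h1w]
        rw [← hexp2]
        ring
      rw [← h2, ← mul_pow, hA]
      norm_num
    have hkey : w j * (A j) ^ 2 * (Complex.cos θ) ^ 2 = 1 := by
      linear_combination hsq / 4
    have : w j * (A j) ^ 2 = (1 / Complex.cos θ) ^ 2 := by
      field_simp
      linear_combination hkey
    rw [this]
    push_cast [Complex.ofReal_cos]
    ring
  -- pass to ℂ
  have hmain : ∑ j ∈ Finset.Icc 1 (k - 1), (w j * (A j) ^ 2) = (k : ℂ) ^ 2 - 1 := by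
    have hIcc : Finset.Icc 1 (k - 1) = Finset.Ico 1 k := by
      rw [← Finset.Ico_add_one_right_eq_Icc]
      congr 1
      omega
    -- total sum over range k
    have hinner : ∀ r : ℕ, ∑ j ∈ range k, ((ζ ^ 2) ^ r) ^ j =
        if k ∣ r then (k : ℂ) else 0 := by
      intro r
      by_cases hd : k ∣ r
      · rw [if_pos hd, (hv.pow_eq_one_iff_dvd r).mpr hd]
        simp
      · rw [if_neg hd]
        have hne : (ζ ^ 2) ^ r ≠ 1 := fun h => hd ((hv.pow_eq_one_iff_dvd r).mp h)
        rw [geom_sum_eq hne]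
        rw [pow_right_comm, hv.pow_eq_one, one_pow, sub_self, zero_div]
    have hexpand : ∀ j, w j * (A j) ^ 2 =
        ∑ m ∈ range k, ∑ n ∈ range k, ((-1 : ℂ)) ^ (m + n) * ((ζ ^ 2) ^ (1 + m + n)) ^ j := by
      intro j
      rw [sq, hAdef]
      show w j * ((∑ m ∈ range k, (-(w j)) ^ m) * (∑ n ∈ range k, (-(w j)) ^ n)) = _
      rw [Finset.sum_mul_sum, Finset.mul_sum]
      refine Finset.sum_congr rfl fun m _ => ?_
      rw [Finset.mul_sum]
      refine Finset.sum_congr rfl fun n _ => ?_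
      have h1 : ((ζ ^ 2) ^ (1 + m + n)) ^ j = (w j) ^ (1 + m + n) := by
        show _ = ((ζ ^ 2) ^ j) ^ (1 + m + n)
        rw [pow_right_comm]
      rw [h1]
      rw [neg_pow, neg_pow, pow_add, pow_add, pow_add]
      ring
    have hT : ∑ j ∈ range k, w j * (A j) ^ 2 = (k : ℂ) ^ 2 := by
      calc ∑ j ∈ range k, w j * (A j) ^ 2
          = ∑ j ∈ range k, ∑ m ∈ range k, ∑ n ∈ range k,
              ((-1 : ℂ)) ^ (m + n) * ((ζ ^ 2) ^ (1 + m + n)) ^ j := by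
            exact Finset.sum_congr rfl fun j _ => hexpand j
        _ = ∑ m ∈ range k, ∑ n ∈ range k, ∑ j ∈ range k,
              ((-1 : ℂ)) ^ (m + n) * ((ζ ^ 2) ^ (1 + m + n)) ^ j := by
            rw [Finset.sum_comm]
            exact Finset.sum_congr rfl fun m _ => Finset.sum_comm
        _ = ∑ m ∈ range k, ∑ n ∈ range k,
              ((-1 : ℂ)) ^ (m + n) * (if k ∣ (1 + m + n) then (k : ℂ) else 0) := by
            refine Finset.sum_congr rfl fun m _ => Finset.sum_congr rfl fun n _ => ?_
            rw [← Finset.mul_sum, hinner]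
        _ = ∑ m ∈ range k, (k : ℂ) := by
            refine Finset.sum_congr rfl fun m hm => ?_
            rw [Finset.mem_range] at hm
            rw [Finset.sum_eq_single (k - 1 - m)]
            · have hdvd : k ∣ 1 + m + (k - 1 - m) := by
                have : 1 + m + (k - 1 - m) = k := by omega
                rw [this]
              rw [if_pos hdvd]
              have hmn : m + (k - 1 - m) = k - 1 := by omega
              rw [hmn]
              have : Even (k - 1) := by
                obtain ⟨c, hc⟩ := hk
                exact ⟨c, by omega⟩
              rw [this.neg_one_pow, one_mul]
            · intro n hn hne
              rw [Finset.mem_range] at hn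
              have : ¬ k ∣ 1 + m + n := by
                intro hd
                have hle := Nat.le_of_dvd (by omega) hd
                have hd2 : k ∣ (1 + m + n - k) := Nat.dvd_sub hd dvd_rfl
                rcases Nat.eq_zero_or_pos (1 + m + n - k) with hz | hz
                · omega
                · have := Nat.le_of_dvd hz hd2
                  omega
              rw [if_neg this, mul_zero]
            · intro h
              exfalso
              apply h
              rw [Finset.mem_range]
              omega
        _ = (k : ℂ) ^ 2 := by
            rw [Finset.sum_const, Finset.card_range, nsmul_eq_mul, sq]
    have h0 : w 0 * (A 0) ^ 2 = 1 := by
      have hw0 : w 0 = 1 := pow_zero _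
      have hA0 : A 0 = 1 := by
        show ∑ m ∈ range k, (-(w 0)) ^ m = 1
        rw [hw0]
        rw [show -(1:ℂ) = -1 from rfl, neg_one_geom_sum, if_neg (Nat.not_even_iff_odd.mpr hk)]
      rw [hw0, hA0]
      norm_num
    have hsplit : ∑ j ∈ range k, w j * (A j) ^ 2 =
        w 0 * (A 0) ^ 2 + ∑ j ∈ Finset.Ico 1 k, w j * (A j) ^ 2 := by
      rw [Finset.range_eq_Ico, Finset.sum_eq_sum_Ico_succ_bot (by omega : 0 < k)]
    rw [hIcc]
    have heq := hsplit
    rw [hT, h0] at heq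
    linear_combination -heq
  have hcast : ((∑ j ∈ Finset.Icc 1 (k - 1), (1 / Real.cos (2 * π * j / k)) ^ 2 : ℝ) : ℂ)
      = ∑ j ∈ Finset.Icc 1 (k - 1), w j * (A j) ^ 2 := by
    rw [Complex.ofReal_sum]
    exact Finset.sum_congr rfl hterm
  apply Complex.ofReal_injective
  rw [hcast, hmain]
  push_cast
  ring
end

section
/- For integers a, k with 0 < a < k, the sum over j from 1 to k-1 of cot(πj/k)·sin(2πaj/k) equals k − 2a. -/
open Finset Real

private lemma cot_key (θ : ℝ) : ∀ b : ℕ,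
    Real.cos θ * Real.sin (2 * (b + 1) * θ) =
    Real.sin θ * (1 + 2 * ∑ m ∈ Finset.Icc 1 b, Real.cos (2 * m * θ)
      + Real.cos (2 * (b + 1) * θ)) := by
  intro b
  induction b with
  | zero =>
      have h1 : Real.sin (2 * θ) = 2 * Real.sin θ * Real.cos θ := Real.sin_two_mul θ
      have h2 : Real.cos (2 * θ) = 2 * Real.cos θ ^ 2 - 1 := Real.cos_two_mul θ
      have h3 := Real.sin_sq_add_cos_sq θ
      simp only [Finset.Icc_eq_empty_of_lt (by norm_num : (0:ℕ) < 1), Finset.sum_empty,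
        Nat.cast_zero, zero_add, mul_one, mul_zero, add_zero]
      rw [h1, h2]; ring
  | succ b ih =>
      have hsum : ∑ m ∈ Finset.Icc 1 (b + 1), Real.cos (2 * m * θ)
          = (∑ m ∈ Finset.Icc 1 b, Real.cos (2 * m * θ)) + Real.cos (2 * ((b:ℝ)+1) * θ) := by
        rw [Finset.sum_Icc_succ_top (by omega)]
        norm_num
      have e1 : (2 : ℝ) * ((b:ℝ) + 1 + 1) * θ = 2 * ((b:ℝ)+1) * θ + 2 * θ := by ring
      have hs : Real.sin (2 * ((b:ℝ) + 1 + 1) * θ)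
          = Real.sin (2*((b:ℝ)+1)*θ) * Real.cos (2*θ) + Real.cos (2*((b:ℝ)+1)*θ) * Real.sin (2*θ) := by
        rw [e1, Real.sin_add]
      have hc : Real.cos (2 * ((b:ℝ) + 1 + 1) * θ)
          = Real.cos (2*((b:ℝ)+1)*θ) * Real.cos (2*θ) - Real.sin (2*((b:ℝ)+1)*θ) * Real.sin (2*θ) := by
        rw [e1, Real.cos_add]
      have h1 : Real.sin (2 * θ) = 2 * Real.sin θ * Real.cos θ := Real.sin_two_mul θ
      have h2 : Real.cos (2 * θ) = 2 * Real.cos θ ^ 2 - 1 := Real.cos_two_mul θ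
      have h3 := Real.sin_sq_add_cos_sq θ
      push_cast
      rw [hsum, hs, hc, h1, h2]
      linear_combination ih + 2 * Real.sin (2*((b:ℝ)+1)*θ) * Real.cos θ * h3

private lemma sum_cos_neg_one (k m : ℕ) (hm : 0 < m) (hmk : m < k) :
    ∑ j ∈ Finset.Icc 1 (k - 1), Real.cos (2 * π * m * j / k) = -1 := by
  have hk : 0 < k := lt_trans hm hmk
  have hk0 : (k : ℂ) ≠ 0 := Nat.cast_ne_zero.mpr hk.ne'
  set ζ : ℂ := Complex.exp (2 * π * Complex.I * m / k) with hζ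
  have hζk : ζ ^ k = 1 := by
    rw [hζ, ← Complex.exp_nat_mul]
    have : (k : ℂ) * (2 * π * Complex.I * m / k) = (m : ℤ) * (2 * π * Complex.I) := by
      push_cast; field_simp
    rw [this, Complex.exp_int_mul_two_pi_mul_I]
  have hζ1 : ζ ≠ 1 := by
    intro h
    rw [hζ, Complex.exp_eq_one_iff] at h
    obtain ⟨n, hn⟩ := h
    have hπ : (π : ℂ) ≠ 0 := by
      exact_mod_cast Real.pi_ne_zero
    have hI : Complex.I ≠ 0 := Complex.I_ne_zero
    have h2πI : (2 * (π:ℂ) * Complex.I) ≠ 0 :=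
      mul_ne_zero (mul_ne_zero two_ne_zero hπ) hI
    have hmc : (m : ℂ) = n * k := by
      apply mul_left_cancel₀ h2πI
      field_simp at hn
      linear_combination (2 * (π:ℂ) * Complex.I) * hn
    have hmz : (m : ℤ) = n * k := by exact_mod_cast hmc
    have h1 : (0 : ℤ) < m := by exact_mod_cast hm
    have h2 : (m : ℤ) < k := by exact_mod_cast hmk
    have h3 : (0 : ℤ) < k := by exact_mod_cast hk
    rcases le_or_gt n 0 with h | h
    · nlinarith
    · nlinarith
  have hgeom : ∑ j ∈ Finset.range k, ζ ^ j = 0 := by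
    rw [geom_sum_eq hζ1, hζk]
    simp
  have hre : ∀ j : ℕ, (ζ ^ j).re = Real.cos (2 * π * m * j / k) := by
    intro j
    rw [hζ, ← Complex.exp_nat_mul]
    have : (j : ℂ) * (2 * π * Complex.I * m / k) = ((2 * π * m * j / k : ℝ) : ℂ) * Complex.I := by
      push_cast; ring
    rw [this, Complex.exp_ofReal_mul_I_re]
  have hresum : ∑ j ∈ Finset.range k, Real.cos (2 * π * m * j / k) = 0 := by
    have := congrArg Complex.re hgeom
    rw [Complex.re_sum] at this
    simpa [hre] using this
  have h0 : insert 0 (Finset.Icc 1 (k - 1)) = Finset.range k := by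
    ext x
    simp only [Finset.mem_insert, Finset.mem_Icc, Finset.mem_range]
    omega
  rw [← h0, Finset.sum_insert (by simp)] at hresum
  simp only [Nat.cast_zero, mul_zero, zero_div, Real.cos_zero] at hresum
  linarith

theorem sum_cot_sin (a k : ℕ) (ha : 0 < a) (hak : a < k) :
    ∑ j ∈ Finset.Icc 1 (k - 1),
      (Real.cos (π * j / k) / Real.sin (π * j / k)) * Real.sin (2 * π * a * j / k) =
    (k : ℝ) - 2 * a := by
  obtain ⟨b, rfl⟩ : ∃ b, a = b + 1 := ⟨a - 1, by omega⟩
  have hk : 0 < k := by omega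
  have hterm : ∀ j ∈ Finset.Icc 1 (k - 1),
      (Real.cos (π * j / k) / Real.sin (π * j / k)) * Real.sin (2 * π * (b+1) * j / k)
      = 1 + 2 * ∑ m ∈ Finset.Icc 1 b, Real.cos (2 * π * m * j / k)
        + Real.cos (2 * π * (b+1) * j / k) := by
    intro j hj
    simp only [Finset.mem_Icc] at hj
    set θ : ℝ := π * j / k with hθ
    have hθpos : 0 < θ := by
      apply div_pos (mul_pos Real.pi_pos (by exact_mod_cast hj.1)) (by exact_mod_cast hk)
    have hθlt : θ < π := by
      rw [hθ, div_lt_iff₀ (by exact_mod_cast hk)]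
      have : (j : ℝ) < k := by
        have : j < k := by omega
        exact_mod_cast this
      nlinarith [Real.pi_pos]
    have hsin : Real.sin θ ≠ 0 := ne_of_gt (Real.sin_pos_of_pos_of_lt_pi hθpos hθlt)
    have key := cot_key θ b
    have e2 : 2 * π * ((b:ℝ)+1) * j / k = 2 * ((b:ℝ)+1) * θ := by rw [hθ]; ring
    have e3 : ∀ m : ℕ, 2 * π * (m:ℝ) * j / k = 2 * (m:ℝ) * θ := by
      intro m; rw [hθ]; ring
    push_cast
    rw [e2]
    rw [div_mul_eq_mul_div, div_eq_iff hsin]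
    rw [key]
    simp only [e3]
    ring
  push_cast
  rw [Finset.sum_congr rfl hterm]
  rw [Finset.sum_add_distrib, Finset.sum_add_distrib]
  have hcard : ∑ _j ∈ Finset.Icc 1 (k-1), (1:ℝ) = (k:ℝ) - 1 := by
    rw [Finset.sum_const, Nat.card_Icc]
    have : k - 1 + 1 - 1 = k - 1 := by omega
    rw [this]
    simp [Nat.cast_sub hk]
  have hlast : ∑ j ∈ Finset.Icc 1 (k-1), Real.cos (2 * π * ((b:ℝ)+1) * j / k) = -1 := by
    have := sum_cos_neg_one k (b+1) (by omega) hak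
    push_cast at this
    exact this
  have hmid : ∑ j ∈ Finset.Icc 1 (k-1), (2 * ∑ m ∈ Finset.Icc 1 b, Real.cos (2 * π * m * j / k))
      = -2 * b := by
    rw [← Finset.mul_sum, Finset.sum_comm]
    have : ∀ m ∈ Finset.Icc 1 b, ∑ j ∈ Finset.Icc 1 (k-1), Real.cos (2 * π * m * j / k) = -1 := by
      intro m hm
      simp only [Finset.mem_Icc] at hm
      exact sum_cos_neg_one k m (by omega) (by omega)
    rw [Finset.sum_congr rfl this, Finset.sum_const, Nat.card_Icc]
    simp
  rw [hcard, hmid, hlast]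
  push_cast
  ring
end

section
/- For every odd positive integer k ≥ 3 and integer a with 0 < a < k, the sum over j from 1 to k-1 of tan(πj/k)·sin(2πaj/k) equals (−1)^(a+1)·k. -/
open Finset Real

lemma trig1 (x s : ℝ) (hx : Real.cos x ≠ 0) :
    Real.tan x * (Real.sin (s + 2*x) + Real.sin s) = Real.cos s - Real.cos (s + 2*x) := by
  rw [Real.tan_eq_sin_div_cos]
  rw [Real.sin_add, Real.cos_add, Real.sin_two_mul, Real.cos_two_mul]
  field_simp
  linear_combination 2 * Real.cos s * Real.cos x * Real.sin_sq_add_cos_sq x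

lemma trig0 (x : ℝ) (hx : Real.cos x ≠ 0) :
    Real.tan x * Real.sin (2*x) = 1 - Real.cos (2*x) := by
  rw [Real.tan_eq_sin_div_cos, Real.sin_two_mul, Real.cos_two_mul']
  field_simp
  linear_combination Real.sin_sq_add_cos_sq x

lemma cos_sum_range (k m : ℕ) (hm : 0 < m) (hmk : m < k) :
    ∑ j ∈ Finset.range k, Real.cos (2*π*m*j/k) = 0 := by
  have hk0 : (k:ℝ) ≠ 0 := Nat.cast_ne_zero.mpr (by omega)
  have hk0C : (k:ℂ) ≠ 0 := Nat.cast_ne_zero.mpr (by omega)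
  set ζ : ℂ := Complex.exp ((2*π*m/k : ℝ) * Complex.I) with hζ
  have hζk : ζ ^ k = 1 := by
    rw [hζ, ← Complex.exp_nat_mul]
    have : (k:ℂ) * ((2*π*m/k : ℝ) * Complex.I) = (m:ℤ) * (2 * π * Complex.I) := by
      push_cast
      field_simp
    rw [this, Complex.exp_int_mul_two_pi_mul_I]
  have hζ1 : ζ ≠ 1 := by
    intro h
    rw [hζ, Complex.exp_eq_one_iff] at h
    obtain ⟨n, hn⟩ := h
    have him := congrArg Complex.im hn
    simp [Complex.mul_im, Complex.mul_re] at him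
    have hπ : (0:ℝ) < π := Real.pi_pos
    have hmn : (m:ℝ) = n * k := by
      field_simp at him
      nlinarith [him]
    have hkpos : (0:ℝ) < k := by positivity
    have hn1 : (1:ℝ) ≤ n := by
      by_contra hcon
      push_neg at hcon
      have : (n:ℝ) ≤ 0 := by
        have : n ≤ 0 := by exact_mod_cast Int.lt_add_one_iff.mp (by exact_mod_cast hcon)
        exact_mod_cast this
      nlinarith [hm, (Nat.cast_pos (α := ℝ)).mpr hm]
    nlinarith [(Nat.cast_lt (α := ℝ)).mpr hmk]
  have hsum : ∑ j ∈ Finset.range k, ζ ^ j = 0 := by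
    rw [geom_sum_eq hζ1 k, hζk]
    simp
  have hre : ∀ j : ℕ, (ζ ^ j).re = Real.cos (2*π*m*j/k) := by
    intro j
    rw [hζ, ← Complex.exp_nat_mul]
    have : (j:ℂ) * ((2*π*m/k : ℝ) * Complex.I) = ((2*π*m*j/k : ℝ) : ℂ) * Complex.I := by
      push_cast; ring
    rw [this, Complex.exp_ofReal_mul_I_re]
  calc ∑ j ∈ Finset.range k, Real.cos (2*π*m*j/k) = (∑ j ∈ Finset.range k, ζ ^ j).re := by
        rw [Complex.re_sum]; exact Finset.sum_congr rfl fun j _ => (hre j).symm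
    _ = 0 := by rw [hsum]; rfl

lemma cos_sum_Icc (k m : ℕ) (hm : 0 < m) (hmk : m < k) :
    ∑ j ∈ Finset.Icc 1 (k-1), Real.cos (2*π*m*j/k) = -1 := by
  have hrange := cos_sum_range k m hm hmk
  have hins : Finset.range k = insert 0 (Finset.Icc 1 (k-1)) := by
    ext j; simp [Finset.mem_range, Finset.mem_Icc]; omega
  rw [hins, Finset.sum_insert (by simp)] at hrange
  simp at hrange
  linarith

lemma cos_ne (k j : ℕ) (hk : Odd k) (hkpos : 0 < k) : Real.cos (π*j/k) ≠ 0 := by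
  have hk0 : (k:ℝ) ≠ 0 := Nat.cast_ne_zero.mpr (by omega)
  have hπ : π ≠ 0 := Real.pi_ne_zero
  intro h
  rw [Real.cos_eq_zero_iff] at h
  obtain ⟨n, hn⟩ := h
  have h2 : (2*j : ℝ) = ((2*n+1) * k : ℝ) := by
    field_simp at hn
    nlinarith [Real.pi_pos, hn]
  have h3 : (2*(j:ℤ)) = (2*n+1) * k := by exact_mod_cast h2
  have hodd : Odd ((2*n+1) * (k:ℤ)) := (odd_two_mul_add_one n).mul (by exact_mod_cast hk)
  rw [← h3] at hodd
  exact (Int.not_odd_iff_even.mpr ⟨j, by ring⟩) hodd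

theorem sum_tan_sin (a k : ℕ) (hk : Odd k) (hk3 : 3 ≤ k) (ha : 0 < a) (hak : a < k) :
    ∑ j ∈ Finset.Icc 1 (k - 1), Real.tan (π * j / k) * Real.sin (2 * π * a * j / k) =
    (-1) ^ (a + 1) * k := by
  have hkpos : 0 < k := by omega
  have hk0 : (k:ℝ) ≠ 0 := Nat.cast_ne_zero.mpr (by omega)
  have hcos : ∀ j : ℕ, Real.cos (π*j/k) ≠ 0 := fun j => cos_ne k j hk hkpos
  induction a with
  | zero => omega
  | succ b ih =>
    rcases Nat.eq_zero_or_pos b with hb0 | hbpos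
    · -- base case a = 1
      subst hb0
      have hstep : ∀ j ∈ Finset.Icc 1 (k-1),
          Real.tan (π * j / k) * Real.sin (2 * π * ((0:ℕ)+1 : ℕ) * j / k)
            = 1 - Real.cos (2*π*(1:ℕ)*j/k) := by
        intro j _
        have harg : (2 * π * ((0:ℕ)+1 : ℕ) * j / k : ℝ) = 2*(π*j/k) := by push_cast; ring
        have harg2 : (2*π*((1:ℕ):ℝ)*j/k) = 2*(π*j/k) := by push_cast; ring
        rw [harg, trig0 _ (hcos j)]
      rw [Finset.sum_congr rfl hstep, Finset.sum_sub_distrib,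
        cos_sum_Icc k 1 (by omega) (by omega), Finset.sum_const, Nat.card_Icc]
      have hcard : (k - 1 + 1 - 1 : ℕ) = k - 1 := by omega
      rw [hcard, nsmul_eq_mul, Nat.cast_sub (show 1 ≤ k by omega)]
      push_cast
      ring
    · -- inductive step
      have hbk : b < k := by omega
      have hS := ih (by omega) hbk
      have hstep : ∀ j ∈ Finset.Icc 1 (k-1),
          Real.tan (π * j / k) * Real.sin (2 * π * (b+1 : ℕ) * j / k)
            = (Real.cos (2*π*b*j/k) - Real.cos (2*π*(b+1:ℕ)*j/k))
              - Real.tan (π * j / k) * Real.sin (2 * π * b * j / k) := by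
        intro j _
        have harg : (2 * π * ((b+1 : ℕ):ℝ) * j / k : ℝ) = 2*π*b*j/k + 2*(π*j/k) := by
          push_cast; ring
        have h1 := trig1 (π*j/k) (2*π*b*j/k) (hcos j)
        rw [harg]
        linarith [h1]
      rw [Finset.sum_congr rfl hstep, Finset.sum_sub_distrib, Finset.sum_sub_distrib,
        cos_sum_Icc k b hbpos hbk, cos_sum_Icc k (b+1) (by omega) hak, hS]
      rw [pow_succ]
      ring
end

section
/- For every odd positive integer k ≥ 3 and integer a with 0 < a < k, the sum over j from 1 to k-1 of sin(2πaj/k)/sin(2πj/k) equals k − a if a is odd and −a if a is even. -/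
open Finset Real

lemma sinNe (k j : ℕ) (hk : Odd k) (h1 : 1 ≤ j) (h2 : j < k) :
    Real.sin (2 * π * j / k) ≠ 0 := by
  have hk0 : (k:ℝ) ≠ 0 := Nat.cast_ne_zero.mpr (by omega)
  intro h
  rw [Real.sin_eq_zero_iff] at h
  obtain ⟨n, hn⟩ := h
  have h2j : (n : ℝ) * k = 2 * j := by
    have hπ : π ≠ 0 := Real.pi_ne_zero
    field_simp at hn
    have : (n : ℝ) * k * π = 2 * j * π := by rw [hn]
    exact mul_right_cancel₀ hπ this
  have h2j' : (n : ℤ) * k = 2 * j := by exact_mod_cast h2j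
  have hdvd : (k : ℤ) ∣ 2 * j := ⟨n, by linarith⟩
  have hdvdn : k ∣ 2 * j := by exact_mod_cast hdvd
  have hcop : Nat.Coprime k 2 := Nat.Coprime.symm (Nat.coprime_two_left.mpr hk)
  have : k ∣ j := hcop.dvd_of_dvd_mul_left hdvdn
  have := Nat.le_of_dvd (by omega) this
  omega

lemma cosSum (k n : ℕ) (hk : 0 < k) (hn : ¬ k ∣ n) :
    ∑ j ∈ Finset.range k, Real.cos (2 * π * n * j / k) = 0 := by
  have hk0 : (k:ℂ) ≠ 0 := Nat.cast_ne_zero.mpr (by omega)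
  set ζ : ℂ := Complex.exp (2 * π * n / k * Complex.I) with hζ
  have hζk : ζ ^ k = 1 := by
    rw [hζ, ← Complex.exp_nat_mul]
    have : (k:ℂ) * (2 * π * n / k * Complex.I) = n * (2 * π * Complex.I) := by
      field_simp
    rw [this, Complex.exp_nat_mul, Complex.exp_two_pi_mul_I, one_pow]
  have hζ1 : ζ ≠ 1 := by
    intro h
    rw [hζ, Complex.exp_eq_one_iff] at h
    obtain ⟨m, hm⟩ := h
    have hne : (2 * (π:ℂ) * Complex.I) ≠ 0 := by
      simp [Real.pi_ne_zero, Complex.I_ne_zero, Complex.ofReal_ne_zero]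
    have hc : (n:ℂ) = m * k := by
      have : (n:ℂ) * (2 * π * Complex.I) = ((m:ℂ) * k) * (2 * π * Complex.I) := by
        field_simp at hm
        linear_combination (2 * (π:ℂ) * Complex.I) * hm
      exact mul_right_cancel₀ hne this
    have hz : (n:ℤ) = m * k := by exact_mod_cast hc
    have : (k:ℤ) ∣ (n:ℤ) := ⟨m, by linarith⟩
    exact hn (by exact_mod_cast this)
  have hsum : ∑ j ∈ Finset.range k, ζ ^ j = 0 := by
    rw [geom_sum_eq hζ1, hζk]
    simp
  have : ∑ j ∈ Finset.range k, Real.cos (2 * π * n * j / k)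
      = (∑ j ∈ Finset.range k, ζ ^ j).re := by
    rw [Complex.re_sum]
    refine Finset.sum_congr rfl fun j _ => ?_
    rw [hζ, ← Complex.exp_nat_mul]
    have : (j:ℂ) * (2 * π * n / k * Complex.I)
        = ((2 * π * n * j / k : ℝ) : ℂ) * Complex.I := by
      push_cast; ring
    rw [this, Complex.exp_ofReal_mul_I_re]
  rw [this, hsum]
  simp

lemma sumIcc (k n : ℕ) (hk3 : 3 ≤ k) (hn : ¬ k ∣ n) :
    ∑ j ∈ Finset.Icc 1 (k-1), Real.cos (2 * π * n * j / k) = -1 := by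
  have h0 : Finset.Icc 1 (k-1) = (Finset.range k).erase 0 := by
    ext x; simp only [Finset.mem_Icc, Finset.mem_erase, Finset.mem_range]; omega
  rw [h0, Finset.sum_erase_eq_sub (Finset.mem_range.mpr (by omega)),
    cosSum k n (by omega) hn]
  norm_num

lemma ptStep (a θ : ℝ) (h : Real.sin θ ≠ 0) :
    Real.sin ((a+2)*θ) / Real.sin θ
      = Real.sin (a*θ) / Real.sin θ + 2 * Real.cos ((a+1)*θ) := by
  have e : Real.sin ((a+2)*θ) = Real.sin (a*θ) + 2 * Real.cos ((a+1)*θ) * Real.sin θ := by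
    have h1 : (a+2)*θ = (a+1)*θ + θ := by ring
    have h2 : a*θ = (a+1)*θ - θ := by ring
    rw [h1, Real.sin_add, h2, Real.sin_sub]
    ring
  rw [e]
  field_simp

lemma auxMain (k : ℕ) (hk : Odd k) (hk3 : 3 ≤ k) :
    ∀ a : ℕ, 0 < a → a < k →
    ∑ j ∈ Finset.Icc 1 (k - 1), Real.sin (2 * π * a * j / k) / Real.sin (2 * π * j / k) =
      if Odd a then (k : ℝ) - a else -(a : ℝ) := by
  have hck : (k:ℝ) ≠ 0 := Nat.cast_ne_zero.mpr (by omega)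
  intro a
  induction a using Nat.strong_induction_on with
  | _ a ih =>
  intro ha hak
  rcases a with _ | _ | _ | c
  · omega
  · -- a = 1
    rw [show 0+1 = 1 by rfl]
    rw [if_pos odd_one]
    have : ∀ j ∈ Finset.Icc 1 (k-1),
        Real.sin (2 * π * (1:ℕ) * j / k) / Real.sin (2 * π * j / k) = 1 := by
      intro j hj
      simp only [Finset.mem_Icc] at hj
      have hs := sinNe k j hk hj.1 (by omega)
      rw [show 2 * π * ((1:ℕ):ℝ) * j / k = 2 * π * j / k by push_cast; ring, div_self hs]
    rw [Finset.sum_congr rfl this, Finset.sum_const, Nat.card_Icc]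
    rw [Nat.cast_one]
    have : k - 1 + 1 - 1 = k - 1 := by omega
    rw [this, nsmul_eq_mul, mul_one, Nat.cast_sub (by omega), Nat.cast_one]
  · -- a = 2
    rw [show 0+1+1 = 2 by rfl]
    rw [if_neg (by decide)]
    have hc1 : ∑ j ∈ Finset.Icc 1 (k-1), Real.cos (2 * π * j / k) = -1 := by
      have h1 := sumIcc k 1 hk3 (fun h => by have := Nat.le_of_dvd one_pos h; omega)
      simpa using h1
    have hterm : ∀ j ∈ Finset.Icc 1 (k-1),
        Real.sin (2 * π * (2:ℕ) * j / k) / Real.sin (2 * π * j / k)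
          = 2 * Real.cos (2 * π * j / k) := by
      intro j hj
      simp only [Finset.mem_Icc] at hj
      have hs := sinNe k j hk hj.1 (by omega)
      rw [show 2 * π * ((2:ℕ):ℝ) * j / k = 2 * (2 * π * j / k) by push_cast; ring,
        Real.sin_two_mul]
      field_simp
    rw [Finset.sum_congr rfl hterm, ← Finset.mul_sum, hc1]
    norm_num
  · -- a = c + 3
    rw [show c+1+1+1 = c+3 by omega]
    have ihc := ih (c+1) (by omega) (by omega) (by omega)
    have hnd : ¬ k ∣ (c+2) := fun h => by have := Nat.le_of_dvd (by omega) h; omega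
    have hsum : ∑ j ∈ Finset.Icc 1 (k-1),
          Real.sin (2 * π * (c+3:ℕ) * j / k) / Real.sin (2 * π * j / k)
        = (∑ j ∈ Finset.Icc 1 (k-1),
            Real.sin (2 * π * (c+1:ℕ) * j / k) / Real.sin (2 * π * j / k))
          + ∑ j ∈ Finset.Icc 1 (k-1), 2 * Real.cos (2 * π * (c+2:ℕ) * j / k) := by
      rw [← Finset.sum_add_distrib]
      refine Finset.sum_congr rfl fun j hj => ?_
      simp only [Finset.mem_Icc] at hj
      have hs := sinNe k j hk hj.1 (by omega)
      have key := ptStep ((c+1:ℕ):ℝ) (2 * π * j / k) hs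
      rw [show 2 * π * ((c+3:ℕ):ℝ) * j / k = (((c+1:ℕ):ℝ)+2) * (2 * π * j / k) by
          push_cast; ring,
        show 2 * π * ((c+1:ℕ):ℝ) * j / k = ((c+1:ℕ):ℝ) * (2 * π * j / k) by ring,
        show 2 * π * ((c+2:ℕ):ℝ) * j / k = (((c+1:ℕ):ℝ)+1) * (2 * π * j / k) by
          push_cast; ring]
      exact key
    have hcos : ∑ j ∈ Finset.Icc 1 (k-1), 2 * Real.cos (2 * π * (c+2:ℕ) * j / k) = -2 := by
      rw [← Finset.mul_sum, sumIcc k (c+2) hk3 hnd]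
      norm_num
    rw [hsum, ihc, hcos]
    by_cases ho : Odd (c+1)
    · have h3 : Odd (c+3) := by
        rw [Nat.odd_iff] at ho ⊢; omega
      rw [if_pos ho, if_pos h3]
      push_cast
      ring
    · have h3 : ¬ Odd (c+3) := by
        rw [Nat.odd_iff] at ho ⊢; omega
      rw [if_neg ho, if_neg h3]
      push_cast
      ring

theorem sum_sin_csc (a k : ℕ) (hk : Odd k) (hk3 : 3 ≤ k) (ha : 0 < a) (hak : a < k) :
    ∑ j ∈ Finset.Icc 1 (k - 1), Real.sin (2 * π * a * j / k) / Real.sin (2 * π * j / k) =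
    if Odd a then (k : ℝ) - a else -(a : ℝ) := by
  exact auxMain k hk hk3 a ha hak
end

section
/- For every odd positive integer k ≥ 3, the sum over j from 1 to k-1 of tan(πj/k)·csc(2πj/k) equals (k² − 1)/2. -/
open Finset Real

section Aux

variable {k : ℕ} {ζ : ℂ}

lemma aux_prod_eq (hk0 : 0 < k) (hζ : IsPrimitiveRoot ζ k) (x : ℂ) :
    ∏ j ∈ Finset.range k, (x - ζ ^ j) = x ^ k - 1 := by
  have himg : Polynomial.nthRootsFinset k (1 : ℂ) = (Finset.range k).image (ζ ^ ·) := by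
    symm
    apply Finset.eq_of_subset_of_card_le
    · intro y hy
      simp only [Finset.mem_image] at hy
      obtain ⟨j, _, rfl⟩ := hy
      rw [Polynomial.mem_nthRootsFinset hk0]
      rw [← pow_mul, mul_comm, pow_mul, hζ.pow_eq_one, one_pow]
    · rw [hζ.card_nthRootsFinset, Finset.card_image_of_injOn hζ.injOn_pow, Finset.card_range]
  have h1 := Polynomial.X_pow_sub_one_eq_prod hk0 hζ
  have h2 := congrArg (Polynomial.eval x) h1
  simp only [Polynomial.eval_sub, Polynomial.eval_pow, Polynomial.eval_X, Polynomial.eval_one,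
    Polynomial.eval_prod, Polynomial.eval_sub, Polynomial.eval_C, himg] at h2
  rw [Finset.prod_image (fun a ha b hb h => hζ.injOn_pow ha hb h)] at h2
  exact h2.symm

lemma aux_deriv_prod (hk0 : 0 < k) (hζ : IsPrimitiveRoot ζ k) (x : ℂ) :
    ∑ j ∈ Finset.range k, ∏ l ∈ (Finset.range k).erase j, (x - ζ ^ l) = k * x ^ (k - 1) := by
  have h1 : HasDerivAt (fun y : ℂ => ∏ j ∈ Finset.range k, (y - ζ ^ j))
      (∑ j ∈ Finset.range k, ∏ l ∈ (Finset.range k).erase j, (x - ζ ^ l)) x := by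
    have := HasDerivAt.fun_finsetProd (u := Finset.range k) (f := fun j (y : ℂ) => y - ζ ^ j)
      (f' := fun _ => 1) (x := x) (fun j _ => (hasDerivAt_id x).sub_const _)
    simpa using this
  have h2 : HasDerivAt (fun y : ℂ => ∏ j ∈ Finset.range k, (y - ζ ^ j))
      ((k : ℂ) * x ^ (k - 1)) x := by
    have : (fun y : ℂ => ∏ j ∈ Finset.range k, (y - ζ ^ j)) = fun y => y ^ k - 1 := by
      funext y; exact aux_prod_eq hk0 hζ y
    rw [this]
    exact (hasDerivAt_pow k x).sub_const 1
  exact h1.unique h2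

lemma aux_sum_inv (hk0 : 0 < k) (hζ : IsPrimitiveRoot ζ k) (x : ℂ) (hx : x ^ k ≠ 1) :
    ∑ j ∈ Finset.range k, (x - ζ ^ j)⁻¹ = k * x ^ (k - 1) / (x ^ k - 1) := by
  have hne : ∀ j ∈ Finset.range k, x - ζ ^ j ≠ 0 := by
    intro j hj h
    apply hx
    have hxe : x = ζ ^ j := by linear_combination h
    rw [hxe, ← pow_mul, mul_comm, pow_mul, hζ.pow_eq_one, one_pow]
  have h0 : x ^ k - 1 ≠ 0 := sub_ne_zero.2 hx
  rw [eq_div_iff h0, Finset.sum_mul, ← aux_deriv_prod hk0 hζ x]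
  refine Finset.sum_congr rfl fun j hj => ?_
  rw [← aux_prod_eq hk0 hζ x, ← Finset.mul_prod_erase _ _ hj,
    inv_mul_cancel_left₀ (hne j hj)]

lemma aux_neg_one_pow (hk : Odd k) : (-1 : ℂ) ^ k = -1 := hk.neg_one_pow

lemma aux_sum_lin (hk : Odd k) (hk3 : 3 ≤ k) (hζ : IsPrimitiveRoot ζ k) :
    ∑ j ∈ Finset.range k, (1 + ζ ^ j)⁻¹ = k / 2 := by
  have hk0 : 0 < k := by omega
  have hx : (-1 : ℂ) ^ k ≠ 1 := by rw [aux_neg_one_pow hk]; norm_num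
  have h := aux_sum_inv hk0 hζ (-1) hx
  have he : Even (k - 1) := Nat.Odd.sub_odd hk odd_one
  rw [aux_neg_one_pow hk, he.neg_one_pow] at h
  have : ∑ j ∈ Finset.range k, ((-1 : ℂ) - ζ ^ j)⁻¹ =
      -∑ j ∈ Finset.range k, (1 + ζ ^ j)⁻¹ := by
    rw [← Finset.sum_neg_distrib]
    exact Finset.sum_congr rfl fun j _ => by rw [← inv_neg]; ring_nf
  rw [this] at h
  have := neg_eq_iff_eq_neg.mp h
  rw [this]; ring

lemma aux_sum_sq (hk : Odd k) (hk3 : 3 ≤ k) (hζ : IsPrimitiveRoot ζ k) :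
    ∑ j ∈ Finset.range k, ((1 + ζ ^ j) ^ 2)⁻¹ = -((k : ℂ) ^ 2 - 2 * k) / 4 := by
  have hk0 : 0 < k := by omega
  have hx : (-1 : ℂ) ^ k ≠ 1 := by rw [aux_neg_one_pow hk]; norm_num
  have hne : ∀ j : ℕ, (-1 : ℂ) - ζ ^ j ≠ 0 := by
    intro j h
    apply hx
    have hxe : (-1 : ℂ) = ζ ^ j := by linear_combination h
    rw [hxe, ← pow_mul, mul_comm, pow_mul, hζ.pow_eq_one, one_pow]
  set h : ℂ → ℂ := fun x => ∑ j ∈ Finset.range k, (x - ζ ^ j)⁻¹ with hh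
  set g : ℂ → ℂ := fun x => (k : ℂ) * x ^ (k - 1) / (x ^ k - 1) with hg
  have hopen : IsOpen {x : ℂ | x ^ k ≠ 1} :=
    IsOpen.preimage (continuous_pow k) isOpen_compl_singleton
  have hev : h =ᶠ[nhds (-1 : ℂ)] g :=
    Filter.eventuallyEq_of_mem (hopen.mem_nhds hx) fun x hx' => aux_sum_inv hk0 hζ x hx'
  have hDh : HasDerivAt h (∑ j ∈ Finset.range k, (-1 / ((-1 : ℂ) - ζ ^ j) ^ 2)) (-1) :=
    HasDerivAt.fun_sum fun j _ => ((hasDerivAt_id _).sub_const _).inv (hne j)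
  have hv0 : ((-1 : ℂ) ^ k - 1) ≠ 0 := sub_ne_zero.2 hx
  have hu : HasDerivAt (fun x : ℂ => (k : ℂ) * x ^ (k - 1))
      ((((k - 1 : ℕ) : ℂ) * (-1) ^ (k - 1 - 1)) * (k : ℂ)) (-1) :=
    (hasDerivAt_pow (k - 1) (-1)).const_mul _ |>.congr_deriv (by ring)
  have hv : HasDerivAt (fun x : ℂ => x ^ k - 1) (((k : ℕ) : ℂ) * (-1) ^ (k - 1)) (-1) :=
    (hasDerivAt_pow k (-1)).sub_const 1
  have hDg : HasDerivAt g
      (((((k - 1 : ℕ) : ℂ) * (-1) ^ (k - 1 - 1)) * (k : ℂ) * ((-1) ^ k - 1) -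
        (k : ℂ) * (-1) ^ (k - 1) * (((k : ℕ) : ℂ) * (-1) ^ (k - 1))) / ((-1) ^ k - 1) ^ 2)
      (-1) := hu.div hv hv0
  have hde : deriv h (-1) = deriv g (-1) := hev.deriv_eq
  rw [hDh.deriv, hDg.deriv] at hde
  have he1 : Even (k - 1) := Nat.Odd.sub_odd hk odd_one
  have ho2 : Odd (k - 1 - 1) := by
    have : k - 1 - 1 = k - 2 := by omega
    rw [this]
    exact Nat.Odd.sub_even (by omega) hk even_two
  rw [aux_neg_one_pow hk, he1.neg_one_pow, ho2.neg_one_pow] at hde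
  have hcast : ((k - 1 : ℕ) : ℂ) = (k : ℂ) - 1 := by
    push_cast [Nat.cast_sub (by omega : 1 ≤ k)]; ring
  rw [hcast] at hde
  have key : ∑ j ∈ Finset.range k, (-1 / ((-1 : ℂ) - ζ ^ j) ^ 2) =
      -∑ j ∈ Finset.range k, ((1 + ζ ^ j) ^ 2)⁻¹ := by
    rw [← Finset.sum_neg_distrib]
    refine Finset.sum_congr rfl fun j _ => ?_
    have : ((-1 : ℂ) - ζ ^ j) ^ 2 = (1 + ζ ^ j) ^ 2 := by ring
    rw [this]; ring
  rw [key] at hde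
  have : ∑ j ∈ Finset.range k, ((1 + ζ ^ j) ^ 2)⁻¹ =
      -((((k : ℂ) - 1) * -1 * (k : ℂ) * (-1 - 1) - (k : ℂ) * 1 * ((k : ℂ) * 1)) / (-1 - 1) ^ 2) := by
    rw [← hde]; ring
  rw [this]; ring

end Aux

lemma aux_term {k j : ℕ} (hk : Odd k) (hk3 : 3 ≤ k) (hj1 : 1 ≤ j) (hj2 : j ≤ k - 1) :
    ((Real.tan (π * j / k) * (1 / Real.sin (2 * π * j / k)) : ℝ) : ℂ) =
      2 * Complex.exp (2 * π * Complex.I / k) ^ j /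
        (1 + Complex.exp (2 * π * Complex.I / k) ^ j) ^ 2 := by
  have hk0 : (0:ℝ) < k := by positivity
  have pi_ne : (π : ℝ) ≠ 0 := ne_of_gt Real.pi_pos
  set θ : ℝ := π * j / k with hθ
  have hθpos : 0 < θ := by
    apply div_pos (by positivity) hk0
  have hθlt : θ < π := by
    rw [hθ, div_lt_iff₀ hk0]
    have : (j : ℝ) < k := by exact_mod_cast (by omega : j < k)
    nlinarith [Real.pi_pos]
  have hsin : Real.sin θ ≠ 0 := ne_of_gt (Real.sin_pos_of_pos_of_lt_pi hθpos hθlt)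
  have hcos : Real.cos θ ≠ 0 := by
    intro h
    obtain ⟨n, hn⟩ := Real.cos_eq_zero_iff.mp h
    rw [hθ] at hn
    have hkne : (k:ℝ) ≠ 0 := ne_of_gt hk0
    have h2 : (2 * (j:ℝ)) = ((2 * (n:ℝ) + 1) * (k:ℝ)) := by
      field_simp at hn
      apply mul_left_cancel₀ pi_ne
      linear_combination π * hn
    have h3 : (2 * (j:ℤ)) = (2 * n + 1) * k := by exact_mod_cast h2
    have ho1 : Odd (2 * n + 1) := ⟨n, by ring⟩
    have hodd : Odd ((2 * n + 1) * (k:ℤ)) := ho1.mul (by exact_mod_cast hk)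
    rw [← h3] at hodd
    obtain ⟨t, ht⟩ := hodd
    omega
  have hreal : Real.tan (π * j / k) * (1 / Real.sin (2 * π * j / k)) =
      1 / (2 * Real.cos θ ^ 2) := by
    have h2θ : 2 * π * j / k = 2 * θ := by rw [hθ]; ring
    rw [h2θ, ← hθ, Real.sin_two_mul, Real.tan_eq_sin_div_cos]
    field_simp
  set c : ℂ := (Real.cos θ : ℂ) with hc
  set s : ℂ := (Real.sin θ : ℂ) with hs
  have hcs : c ^ 2 + s ^ 2 = 1 := by
    rw [hc, hs]
    exact_mod_cast congrArg Complex.ofReal (Real.cos_sq_add_sin_sq θ)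
  have hz : Complex.exp (2 * π * Complex.I / k) ^ j = (c ^ 2 - s ^ 2) + 2 * c * s * Complex.I := by
    rw [← Complex.exp_nat_mul]
    have harg : (j : ℂ) * (2 * π * Complex.I / k) = ((2 * θ : ℝ) : ℂ) * Complex.I := by
      rw [hθ]
      push_cast
      have hkne : (k:ℂ) ≠ 0 := by exact_mod_cast ne_of_gt hk0
      field_simp
    rw [harg, Complex.exp_mul_I, ← Complex.ofReal_cos, ← Complex.ofReal_sin,
      Real.cos_two_mul', Real.sin_two_mul]
    simp only [Complex.ofReal_sub, Complex.ofReal_mul, Complex.ofReal_pow,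
      Complex.ofReal_ofNat, ← hc, ← hs]
    ring
  have hzne : Complex.exp (2 * π * Complex.I / k) ^ j ≠ 0 :=
    pow_ne_zero _ (Complex.exp_ne_zero _)
  have hcne : c ≠ 0 := by rwa [hc, ne_eq, Complex.ofReal_eq_zero]
  have hsq : (1 + Complex.exp (2 * π * Complex.I / k) ^ j) ^ 2 =
      4 * c ^ 2 * Complex.exp (2 * π * Complex.I / k) ^ j := by
    rw [hz]
    linear_combination (-(1 + c^2 + s^2 + 2*(c^2-s^2) + 4*c*s*Complex.I)) * hcs +
      4*c^2*s^2 * Complex.I_sq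
  rw [hreal]
  have hcast : ((1 / (2 * Real.cos θ ^ 2) : ℝ) : ℂ) = 1 / (2 * c ^ 2) := by
    rw [hc]; push_cast; ring
  rw [hcast, hsq, div_eq_div_iff (by simpa using hcne) (by
    exact mul_ne_zero (mul_ne_zero (by norm_num) (pow_ne_zero 2 hcne)) hzne)]
  ring

theorem sum_tan_csc (k : ℕ) (hk : Odd k) (hk3 : 3 ≤ k) :
    ∑ j ∈ Finset.Icc 1 (k - 1), Real.tan (π * j / k) * (1 / Real.sin (2 * π * j / k)) =
    ((k : ℝ) ^ 2 - 1) / 2 := by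
  have hk0 : 0 < k := by omega
  set ζ : ℂ := Complex.exp (2 * π * Complex.I / k) with hζdef
  have hζ : IsPrimitiveRoot ζ k := Complex.isPrimitiveRoot_exp k (by omega)
  have hne1 : ∀ j : ℕ, (1 : ℂ) + ζ ^ j ≠ 0 := by
    intro j h
    have hxe : ζ ^ j = -1 := by linear_combination h
    have h1 : ((ζ : ℂ) ^ j) ^ k = 1 := by
      rw [← pow_mul, mul_comm, pow_mul, hζ.pow_eq_one, one_pow]
    rw [hxe, aux_neg_one_pow hk] at h1
    norm_num at h1
  have hmain : ∑ j ∈ Finset.range k, 2 * ζ ^ j / (1 + ζ ^ j) ^ 2 = (k : ℂ) ^ 2 / 2 := by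
    calc ∑ j ∈ Finset.range k, 2 * ζ ^ j / (1 + ζ ^ j) ^ 2
        = ∑ j ∈ Finset.range k, (2 * (1 + ζ ^ j)⁻¹ - 2 * ((1 + ζ ^ j) ^ 2)⁻¹) := by
          refine Finset.sum_congr rfl fun j _ => ?_
          field_simp [hne1 j]
          ring
      _ = 2 * (∑ j ∈ Finset.range k, (1 + ζ ^ j)⁻¹) -
            2 * ∑ j ∈ Finset.range k, ((1 + ζ ^ j) ^ 2)⁻¹ := by
          rw [Finset.sum_sub_distrib, Finset.mul_sum, Finset.mul_sum]
      _ = (k : ℂ) ^ 2 / 2 := by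
          rw [aux_sum_lin hk hk3 hζ, aux_sum_sq hk hk3 hζ]; ring
  have hsplit : Finset.range k = insert 0 (Finset.Icc 1 (k - 1)) := by
    ext x
    simp only [Finset.mem_range, Finset.mem_insert, Finset.mem_Icc]
    omega
  rw [hsplit, Finset.sum_insert (by simp)] at hmain
  have hF0 : 2 * ζ ^ 0 / (1 + ζ ^ 0) ^ 2 = 1 / 2 := by norm_num
  rw [hF0] at hmain
  have hIcc : ∑ j ∈ Finset.Icc 1 (k - 1), 2 * ζ ^ j / (1 + ζ ^ j) ^ 2 =
      ((k : ℂ) ^ 2 - 1) / 2 := by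
    have := hmain
    field_simp at this ⊢
    linear_combination this
  have hC : ((∑ j ∈ Finset.Icc 1 (k - 1),
      Real.tan (π * j / k) * (1 / Real.sin (2 * π * j / k)) : ℝ) : ℂ) =
      ((k : ℂ) ^ 2 - 1) / 2 := by
    rw [Complex.ofReal_sum]
    rw [← hIcc]
    refine Finset.sum_congr rfl fun j hj => ?_
    rw [Finset.mem_Icc] at hj
    exact aux_term hk hk3 hj.1 hj.2
  rw [show ((k : ℂ) ^ 2 - 1) / 2 = ((((k : ℝ) ^ 2 - 1) / 2 : ℝ) : ℂ) by push_cast; ring] at hC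
  exact Complex.ofReal_injective hC
end

section
/- For every odd positive integer k ≥ 3, the sum over j from 1 to k-1 of cot(πj/k)·csc(2πj/k) equals (k² − 1)/6. -/
open Finset Real

private lemma aux1' (k : ℕ) (z : ℂ) : (z - 1) * ∑ n ∈ range k, (n : ℂ) * z ^ n
    = k * z ^ k - z * ∑ n ∈ range k, z ^ n := by
  induction k with
  | zero => simp
  | succ m ih =>
    rw [sum_range_succ, sum_range_succ]; push_cast; ring_nf; ring_nf at ih
    linear_combination ih

private lemma aux2' (k : ℕ) (z : ℂ) : (z - 1) * ∑ n ∈ range k, (n : ℂ) ^ 2 * z ^ n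
    = k ^ 2 * z ^ k - 2 * z * ∑ n ∈ range k, (n : ℂ) * z ^ n - z * ∑ n ∈ range k, z ^ n := by
  induction k with
  | zero => simp
  | succ m ih =>
    rw [sum_range_succ, sum_range_succ, sum_range_succ]; push_cast; ring_nf; ring_nf at ih
    linear_combination ih

private lemma sum_id' (k : ℕ) : ∑ n ∈ range k, (n : ℂ) = k * (k - 1) / 2 := by
  induction k with
  | zero => simp
  | succ m ih => rw [sum_range_succ, ih]; push_cast; ring

private lemma sum_sq' (k : ℕ) : ∑ n ∈ range k, (n : ℂ) ^ 2 = k * (k - 1) * (2 * k - 1) / 6 := by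
  induction k with
  | zero => simp
  | succ m ih => rw [sum_range_succ, ih]; push_cast; ring

private lemma geo0' {k : ℕ} {z : ℂ} (hz : z ^ k = 1) (h1 : z ≠ 1) :
    ∑ n ∈ range k, z ^ n = 0 := by
  rw [geom_sum_eq h1, hz, sub_self, zero_div]

private lemma inner_sum' {k : ℕ} (hk : 1 ≤ k) {z : ℂ} (hz : z ^ k = 1) (h1 : z ≠ 1) :
    ∑ j ∈ Icc 1 (k - 1), z ^ j = -1 := by
  have h0 : ∑ n ∈ range k, z ^ n = 0 := geo0' hz h1
  have hIcc : Icc 1 (k - 1) = Ico 1 k := by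
    rw [← Finset.Ico_add_one_right_eq_Icc]; congr 1; omega
  rw [range_eq_Ico, Finset.sum_eq_sum_Ico_succ_bot hk] at h0
  rw [hIcc]
  simp only [pow_zero] at h0
  linear_combination h0

private lemma hw_lem {k : ℕ} {z : ℂ} (hz : z ^ k = 1) (h1 : z ≠ 1) :
    ∑ n ∈ range k, (n : ℂ) * z ^ n = k * (z - 1)⁻¹ := by
  have hne : z - 1 ≠ 0 := sub_ne_zero.mpr h1
  have h := aux1' k z
  rw [hz, geo0' hz h1] at h
  field_simp
  linear_combination h

private lemma hw2_lem {k : ℕ} {z : ℂ} (hz : z ^ k = 1) (h1 : z ≠ 1) :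
    ∑ n ∈ range k, (n : ℂ) ^ 2 * z ^ n
      = (k ^ 2 - 2 * k) * (z - 1)⁻¹ - 2 * k * ((z - 1)⁻¹) ^ 2 := by
  have hne : z - 1 ≠ 0 := sub_ne_zero.mpr h1
  have h := aux2' k z
  rw [hz, geo0' hz h1, hw_lem hz h1] at h
  field_simp at h ⊢
  linear_combination h

private noncomputable def zet (k : ℕ) : ℂ := Complex.exp (2 * Real.pi * Complex.I / k)

private lemma zet_prop {k : ℕ} (hk : 3 ≤ k) {j : ℕ} (hj : 1 ≤ j) (hj2 : j ≤ k - 1) :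
    (zet k ^ j) ^ k = 1 ∧ zet k ^ j ≠ 1 := by
  have hζ : IsPrimitiveRoot (zet k) k := by
    have := Complex.isPrimitiveRoot_exp k (by omega)
    simpa [zet] using this
  refine ⟨?_, hζ.pow_ne_one_of_pos_of_lt (by omega) (by omega)⟩
  rw [← pow_mul, mul_comm, pow_mul, hζ.pow_eq_one, one_pow]

private lemma W_sums {k : ℕ} (hk : 3 ≤ k) :
    ∑ j ∈ Icc 1 (k - 1), (zet k ^ j - 1)⁻¹ = -((k : ℂ) - 1) / 2 := by
  have hk0 : (k : ℂ) ≠ 0 := Nat.cast_ne_zero.mpr (by omega)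
  have key : (k : ℂ) * ∑ j ∈ Icc 1 (k - 1), (zet k ^ j - 1)⁻¹
      = -((k : ℂ) * (k - 1) / 2) := by
    rw [mul_sum]
    calc ∑ j ∈ Icc 1 (k - 1), (k : ℂ) * (zet k ^ j - 1)⁻¹
        = ∑ j ∈ Icc 1 (k - 1), ∑ n ∈ range k, (n : ℂ) * (zet k ^ j) ^ n := by
          refine sum_congr rfl fun j hj => ?_
          simp only [mem_Icc] at hj
          obtain ⟨h1, h2⟩ := zet_prop hk hj.1 hj.2
          rw [hw_lem h1 h2]
      _ = ∑ n ∈ range k, ∑ j ∈ Icc 1 (k - 1), (n : ℂ) * (zet k ^ n) ^ j := by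
          rw [sum_comm]
          exact sum_congr rfl fun j _ => sum_congr rfl fun n _ => by
            rw [← pow_mul, ← pow_mul, Nat.mul_comm]
      _ = ∑ n ∈ range k, (n : ℂ) * (-1) := by
          refine sum_congr rfl fun n hn => ?_
          simp only [mem_range] at hn
          rcases Nat.eq_zero_or_pos n with h | h
          · simp [h]
          · rw [← mul_sum]
            congr 1
            obtain ⟨h1, h2⟩ := zet_prop hk h (by omega)
            exact inner_sum' (by omega) h1 h2
      _ = -((k : ℂ) * (k - 1) / 2) := by
          rw [← sum_mul, sum_id']; ring
  have h2 : (k : ℂ) * ∑ j ∈ Icc 1 (k - 1), (zet k ^ j - 1)⁻¹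
      = (k : ℂ) * (-((k : ℂ) - 1) / 2) := by rw [key]; ring
  exact mul_left_cancel₀ hk0 h2

private lemma W2_sum {k : ℕ} (hk : 3 ≤ k) :
    ∑ j ∈ Icc 1 (k - 1), ((zet k ^ j - 1)⁻¹) ^ 2
      = ((k : ℂ) - 1) * (5 - k) / 12 := by
  have hk0 : (k : ℂ) ≠ 0 := Nat.cast_ne_zero.mpr (by omega)
  have key : ∑ j ∈ Icc 1 (k - 1), ((k : ℂ) ^ 2 - 2 * k) * (zet k ^ j - 1)⁻¹
        - ∑ j ∈ Icc 1 (k - 1), 2 * k * ((zet k ^ j - 1)⁻¹) ^ 2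
      = -((k : ℂ) * (k - 1) * (2 * k - 1) / 6) := by
    rw [← sum_sub_distrib]
    calc ∑ j ∈ Icc 1 (k - 1), (((k : ℂ) ^ 2 - 2 * k) * (zet k ^ j - 1)⁻¹
            - 2 * k * ((zet k ^ j - 1)⁻¹) ^ 2)
        = ∑ j ∈ Icc 1 (k - 1), ∑ n ∈ range k, (n : ℂ) ^ 2 * (zet k ^ j) ^ n := by
          refine sum_congr rfl fun j hj => ?_
          simp only [mem_Icc] at hj
          obtain ⟨h1, h2⟩ := zet_prop hk hj.1 hj.2
          rw [hw2_lem h1 h2]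
      _ = ∑ n ∈ range k, ∑ j ∈ Icc 1 (k - 1), (n : ℂ) ^ 2 * (zet k ^ n) ^ j := by
          rw [sum_comm]
          exact sum_congr rfl fun j _ => sum_congr rfl fun n _ => by
            rw [← pow_mul, ← pow_mul, Nat.mul_comm]
      _ = ∑ n ∈ range k, (n : ℂ) ^ 2 * (-1) := by
          refine sum_congr rfl fun n hn => ?_
          simp only [mem_range] at hn
          rcases Nat.eq_zero_or_pos n with h | h
          · simp [h]
          · rw [← mul_sum]
            congr 1
            obtain ⟨h1, h2⟩ := zet_prop hk h (by omega)
            exact inner_sum' (by omega) h1 h2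
      _ = -((k : ℂ) * (k - 1) * (2 * k - 1) / 6) := by
          rw [← sum_mul, sum_sq']; ring
  rw [← mul_sum, ← mul_sum, W_sums hk] at key
  have h2k : (2 * (k : ℂ)) ≠ 0 := by
    simp [hk0]
  have h2 : (2 * (k : ℂ)) * ∑ j ∈ Icc 1 (k - 1), ((zet k ^ j - 1)⁻¹) ^ 2
      = (2 * (k : ℂ)) * (((k : ℂ) - 1) * (5 - k) / 12) := by linear_combination -key
  exact mul_left_cancel₀ h2k h2

private lemma bridge {x : ℝ} (hs : Real.sin x ≠ 0) {z : ℂ}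
    (hz : z = Complex.exp ((2 * x : ℝ) * Complex.I)) :
    ((1 / Real.sin x : ℝ) : ℂ) ^ 2 = -4 * ((z - 1)⁻¹ + ((z - 1)⁻¹) ^ 2) := by
  set e := Complex.exp ((x : ℝ) * Complex.I) with he_def
  have hze : z = e ^ 2 := by
    rw [hz, pow_two, ← Complex.exp_add]; congr 1; push_cast; ring
  have he : e * Complex.exp (-((x : ℝ) * Complex.I)) = 1 := by
    rw [← Complex.exp_add]; simp
  have hs' : e - Complex.exp (-((x : ℝ) * Complex.I)) = 2 * Complex.I * Complex.sin x := by
    rw [Complex.sin, neg_mul]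
    linear_combination (e - Complex.exp (-((x : ℝ) * Complex.I))) * Complex.I_sq
  have h1 : e * e - 1 = e * (2 * Complex.I * Complex.sin x) := by
    linear_combination e * hs' + he
  have hzsq : (z - 1) ^ 2 = -4 * (Complex.sin x) ^ 2 * z := by
    rw [hze]
    linear_combination (e * e - 1 + 2 * Complex.I * Complex.sin x * e) * h1
      + 4 * (Complex.sin x) ^ 2 * e ^ 2 * Complex.I_sq
  have hsc : (Complex.sin (x : ℂ)) = ((Real.sin x : ℝ) : ℂ) := (Complex.ofReal_sin x).symm
  have hsne : ((Real.sin x : ℝ) : ℂ) ≠ 0 := by exact_mod_cast Complex.ofReal_ne_zero.mpr hs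
  have hzne : z ≠ 0 := by rw [hze]; exact pow_ne_zero _ (Complex.exp_ne_zero _)
  have hz1 : z - 1 ≠ 0 := by
    intro h0
    rw [h0] at hzsq
    have : ((Real.sin x : ℝ) : ℂ) ^ 2 * z = 0 := by
      rw [← hsc]; linear_combination hzsq / 4
    exact (mul_ne_zero (pow_ne_zero 2 hsne) hzne) this
  rw [hsc] at hzsq
  have hw : (z - 1)⁻¹ + ((z - 1)⁻¹) ^ 2 = z / (z - 1) ^ 2 := by
    field_simp
    ring
  rw [hw, hzsq]
  push_cast
  rw [div_mul_eq_div_div_swap]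
  field_simp

theorem sum_cot_csc (k : ℕ) (hk : Odd k) (hk3 : 3 ≤ k) :
    ∑ j ∈ Finset.Icc 1 (k - 1),
      (Real.cos (π * j / k) / Real.sin (π * j / k)) * (1 / Real.sin (2 * π * j / k)) =
    ((k : ℝ) ^ 2 - 1) / 6 := by
  have hkR : (k : ℝ) ≠ 0 := Nat.cast_ne_zero.mpr (by omega)
  have hπ := Real.pi_ne_zero
  -- nonvanishing of sin (π j / k)
  have hsin : ∀ j ∈ Icc 1 (k - 1), Real.sin (π * j / k) ≠ 0 := by
    intro j hj
    simp only [mem_Icc] at hj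
    have h1 : (0 : ℝ) < π * j / k := by
      apply div_pos (mul_pos Real.pi_pos (by exact_mod_cast hj.1)) (by positivity)
    have h2 : π * j / k < π := by
      rw [div_lt_iff₀ (by positivity : (0:ℝ) < (k:ℝ))]
      have : (j : ℝ) < k := by exact_mod_cast (by omega : j < k)
      nlinarith [Real.pi_pos]
    exact ne_of_gt (Real.sin_pos_of_pos_of_lt_pi h1 h2)
  -- nonvanishing of sin (2 π j / k), uses oddness of k
  have hsin2 : ∀ j ∈ Icc 1 (k - 1), Real.sin (2 * π * j / k) ≠ 0 := by
    intro j hj h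
    simp only [mem_Icc] at hj
    rw [Real.sin_eq_zero_iff] at h
    obtain ⟨n, hn⟩ := h
    have hreal : (n : ℝ) * k = 2 * j := by
      have h2 : ((n:ℝ) * k) * π = (2 * (j:ℝ)) * π := by
        field_simp at hn
        rw [hn]
      exact mul_right_cancel₀ hπ h2
    have hint : (n : ℤ) * k = 2 * j := by exact_mod_cast hreal
    have hn0 : 0 ≤ n := by
      by_contra hneg
      push_neg at hneg
      have : (n : ℝ) * k < 0 := by
        apply mul_neg_of_neg_of_pos
        · exact_mod_cast hneg
        · positivity
      have : (0:ℝ) < 2 * j := by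
        have : (1:ℝ) ≤ (j:ℝ) := by exact_mod_cast hj.1
        linarith
      linarith [hreal]
    lift n to ℕ using hn0
    have hnat : n * k = 2 * j := by exact_mod_cast hint
    have hdvd : k ∣ 2 * j := ⟨n, by rw [← hnat]; ring⟩
    have hcop : Nat.Coprime k 2 := Nat.coprime_two_right.mpr hk
    have : k ∣ j := (Nat.Coprime.dvd_of_dvd_mul_left hcop hdvd)
    have := Nat.le_of_dvd (by omega) this
    omega
  -- reduce each term to (1/2) * (1 / sin x)^2
  have hterm : ∀ j ∈ Icc 1 (k - 1),
      (Real.cos (π * j / k) / Real.sin (π * j / k)) * (1 / Real.sin (2 * π * j / k))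
        = (1 / 2) * (1 / Real.sin (π * j / k)) ^ 2 := by
    intro j hj
    have h2x : 2 * π * j / k = 2 * (π * j / k) := by ring
    have hs := hsin j hj
    have hs2 := hsin2 j hj
    rw [h2x, Real.sin_two_mul] at hs2 ⊢
    have hc : Real.cos (π * j / k) ≠ 0 := by
      intro h0
      apply hs2
      rw [h0]; ring
    field_simp
  rw [Finset.sum_congr rfl hterm, ← Finset.mul_sum]
  -- the key identity via complex roots of unity
  have hb2 : ∀ j ∈ Icc 1 (k - 1),
      (((1 / Real.sin (π * j / k)) ^ 2 : ℝ) : ℂ)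
        = -4 * ((zet k ^ j - 1)⁻¹ + ((zet k ^ j - 1)⁻¹) ^ 2) := by
    intro j hj
    rw [Complex.ofReal_pow]
    apply bridge (hsin j hj)
    show zet k ^ j = _
    rw [zet, ← Complex.exp_nat_mul]
    congr 1
    push_cast
    ring
  have hC : ∑ j ∈ Icc 1 (k - 1), (((1 / Real.sin (π * j / k)) ^ 2 : ℝ) : ℂ)
      = ((k : ℂ) ^ 2 - 1) / 3 := by
    rw [Finset.sum_congr rfl hb2, ← Finset.mul_sum, Finset.sum_add_distrib,
      W_sums hk3, W2_sum hk3]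
    ring
  have hkey : ∑ j ∈ Icc 1 (k - 1), (1 / Real.sin (π * j / k)) ^ 2 = ((k:ℝ)^2 - 1) / 3 := by
    have h1 : ((∑ j ∈ Icc 1 (k - 1), (1 / Real.sin (π * j / k)) ^ 2 : ℝ) : ℂ)
        = ((k : ℂ) ^ 2 - 1) / 3 := by
      rw [Complex.ofReal_sum]
      exact hC
    have h2 : ((k : ℂ) ^ 2 - 1) / 3 = ((((k:ℝ) ^ 2 - 1) / 3 : ℝ) : ℂ) := by push_cast; ring
    rw [h2] at h1
    exact_mod_cast h1
  rw [hkey]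
  ring
end

section
/- For every odd positive integer k, the sum over j from 0 to k-1 of tan⁴(πj/k) equals k(k−1)(k² + k − 3)/3. -/
open Finset Real

open Polynomial

noncomputable def zz (k : ℕ) : ℂ := Complex.exp (2 * Real.pi * Complex.I / k)

lemma zz_pow_k {k : ℕ} (hk0 : 0 < k) : (zz k) ^ k = 1 := by
  rw [zz, ← Complex.exp_nat_mul]
  rw [mul_div_cancel₀]
  · exact Complex.exp_two_pi_mul_I
  · exact_mod_cast hk0.ne'

lemma zz_prim {k : ℕ} (hk0 : 0 < k) : IsPrimitiveRoot (zz k) k :=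
  Complex.isPrimitiveRoot_exp k hk0.ne'

lemma prod_X_sub_zz {k : ℕ} (hk0 : 0 < k) :
    ∏ j ∈ Finset.range k, (X - C ((zz k) ^ j)) = X ^ k - 1 := by
  have h1 : (Polynomial.nthRoots k (1 : ℂ)) = (Multiset.range k).map (fun j => (zz k) ^ j * 1) :=
    (zz_prim hk0).nthRoots_eq (one_pow k)
  have hm : (X ^ k - C (1:ℂ)).Monic := monic_X_pow_sub_C _ hk0.ne'
  have hcard : Multiset.card (X ^ k - C (1:ℂ)).roots = (X ^ k - C (1:ℂ)).natDegree := by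
    rw [natDegree_X_pow_sub_C, ← Polynomial.nthRoots, h1]
    simp
  have := Polynomial.prod_multiset_X_sub_C_of_monic_of_roots_card_eq hm hcard
  rw [← Polynomial.nthRoots, h1] at this
  rw [map_one] at this
  rw [← this, Finset.prod, Multiset.map_map]
  simp [Finset.range]

lemma prod_eval_zz {k : ℕ} (hk0 : 0 < k) (z : ℂ) :
    ∏ j ∈ Finset.range k, (z - (zz k) ^ j) = z ^ k - 1 := by
  have := congrArg (Polynomial.eval z) (prod_X_sub_zz hk0)
  simpa [Polynomial.eval_prod] using this

lemma one_add_zz_ne {k : ℕ} (hk : Odd k) (hk0 : 0 < k) (j : ℕ) : (1 : ℂ) + (zz k) ^ j ≠ 0 := by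
  intro h
  have hz : (zz k) ^ j = -1 := by linear_combination h
  have h1 : ((zz k) ^ j) ^ k = 1 := by
    rw [← pow_mul, mul_comm, pow_mul, zz_pow_k hk0, one_pow]
  rw [hz, hk.neg_one_pow] at h1
  norm_num at h1

lemma prod_one_add_zz {k : ℕ} (hk : Odd k) (hk0 : 0 < k) :
    ∏ j ∈ Finset.range k, ((1 : ℂ) + (zz k) ^ j) = 2 := by
  have h := prod_eval_zz hk0 (-1)
  rw [hk.neg_one_pow] at h
  have h2 : ∏ j ∈ Finset.range k, ((1:ℂ) + (zz k)^j)
      = ∏ j ∈ Finset.range k, (-1) * ((-1) - (zz k)^j) := by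
    apply Finset.prod_congr rfl; intro j _; ring
  rw [h2, Finset.prod_mul_distrib, Finset.prod_const, Finset.card_range, hk.neg_one_pow, h]
  ring

noncomputable def ww (k j : ℕ) : ℂ := (1 + (zz k) ^ j)⁻¹


lemma coeff_one_sub_X_pow (n m : ℕ) : ((1 - X : ℂ[X]) ^ n).coeff m = (-1) ^ m * n.choose m := by
  have h : ((1 - X : ℂ[X])) ^ n = ∑ i ∈ Finset.range (n + 1), C ((-1) ^ i * (n.choose i : ℂ)) * X ^ i := by
    rw [sub_eq_add_neg, add_comm, add_pow]
    apply Finset.sum_congr rfl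
    intro i _
    rw [neg_pow, one_pow]
    simp only [map_mul, map_pow, map_neg, map_one, map_natCast]
    ring
  rw [h, Polynomial.finset_sum_coeff]
  simp only [Polynomial.coeff_C_mul, Polynomial.coeff_X_pow, mul_ite, mul_one, mul_zero]
  rw [Finset.sum_ite_eq (Finset.range (n + 1)) m]
  by_cases hm : m ∈ Finset.range (n + 1)
  · rw [if_pos hm]
  · rw [if_neg hm]
    rw [Finset.mem_range] at hm
    rw [Nat.choose_eq_zero_of_lt (by omega)]
    simp

lemma prod_X_sub_ww {k : ℕ} (hk : Odd k) (hk0 : 0 < k) :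
    ∏ j ∈ Finset.range k, (X - C (ww k j)) = C (2⁻¹ : ℂ) * (X ^ k - (1 - X) ^ k) := by
  apply Polynomial.eq_of_infinite_eval_eq
  apply Set.Infinite.mono (s := {x : ℂ | x ≠ 0})
  · intro z hz
    have hz : z ≠ 0 := hz
    simp only [Set.mem_setOf_eq, Polynomial.eval_prod, Polynomial.eval_mul, Polynomial.eval_sub,
      Polynomial.eval_pow, Polynomial.eval_C, Polynomial.eval_X, Polynomial.eval_one,
      Polynomial.eval_sub]
    have key : (∏ j ∈ Finset.range k, (z - ww k j)) * 2 = z ^ k - (1 - z) ^ k := by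
      rw [← prod_one_add_zz hk hk0, ← Finset.prod_mul_distrib]
      have h1 : ∀ j ∈ Finset.range k, (z - ww k j) * (1 + zz k ^ j)
          = (-z) * ((1 - z)/z - zz k ^ j) := by
        intro j _
        rw [ww]
        field_simp [one_add_zz_ne hk hk0 j]
        ring
      rw [Finset.prod_congr rfl h1, Finset.prod_mul_distrib, Finset.prod_const,
        Finset.card_range, prod_eval_zz hk0, Odd.neg_pow hk, div_pow]
      field_simp
      ring
    have h2 : (2:ℂ) ≠ 0 := two_ne_zero
    field_simp at key ⊢
    linear_combination key
  · exact Set.Finite.infinite_compl (Set.finite_singleton 0)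

lemma esymm_ww {k : ℕ} (hk : Odd k) (hk0 : 0 < k) (i : ℕ) (hi : 1 ≤ i) :
    (((Finset.range k).val.map (ww k)).esymm i) = (k.choose i : ℂ) / 2 := by
  rcases le_or_gt i k with hik | hik
  · -- use Vieta
    have hs : Multiset.card ((Finset.range k).val.map (ww k)) = k := by simp
    have hv := Multiset.prod_X_sub_C_coeff ((Finset.range k).val.map (ww k))
      (show k - i ≤ Multiset.card ((Finset.range k).val.map (ww k)) by omega)
    rw [hs] at hv
    have hki : k - (k - i) = i := by omega
    rw [hki] at hv
    have hp : ((((Finset.range k).val.map (ww k))).map fun t => X - C t).prod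
        = ∏ j ∈ Finset.range k, (X - C (ww k j)) := by
      rw [Finset.prod, Multiset.map_map]; rfl
    rw [hp, prod_X_sub_ww hk hk0] at hv
    rw [Polynomial.coeff_C_mul, Polynomial.coeff_sub, Polynomial.coeff_X_pow,
      coeff_one_sub_X_pow, if_neg (show ¬ (k - i = k) by omega), Nat.choose_symm hik] at hv
    have hsgn : ((-1 : ℂ)) ^ (k - i) * (-1) ^ i = -1 := by
      rw [← pow_add, show k - i + i = k by omega, hk.neg_one_pow]
    have hsq : ((-1 : ℂ)) ^ i * (-1) ^ i = 1 := by
      rw [← mul_pow]; norm_num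
    calc ((Finset.range k).val.map (ww k)).esymm i
        = ((-1:ℂ)^i * (-1)^i) * ((Finset.range k).val.map (ww k)).esymm i := by rw [hsq, one_mul]
      _ = (-1:ℂ)^i * ((-1:ℂ)^i * ((Finset.range k).val.map (ww k)).esymm i) := by ring
      _ = (-1:ℂ)^i * (2⁻¹ * (0 - (-1) ^ (k - i) * (k.choose i : ℂ))) := by rw [← hv]
      _ = 2⁻¹ * (k.choose i : ℂ) * (-((-1:ℂ) ^ (k - i) * (-1)^i)) := by ring
      _ = (k.choose i : ℂ) / 2 := by rw [hsgn]; ring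
  · rw [Nat.choose_eq_zero_of_lt hik]
    rw [Multiset.esymm]
    rw [Multiset.powersetCard_eq_empty]
    · simp
    · simp [hik]

lemma newton_eval {σ : Type} [Fintype σ] [DecidableEq σ] (f : σ → ℂ) (n : ℕ) (h : 0 < n) :
    ∑ i, f i ^ n = (-1) ^ (n + 1) * n * ((Finset.univ.val.map f).esymm n)
      - ∑ a ∈ (Finset.HasAntidiagonal.antidiagonal n).filter (fun a => a.1 ∈ Set.Ioo 0 n),
          (-1) ^ a.1 * ((Finset.univ.val.map f).esymm a.1) * ∑ i, f i ^ a.2 := by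
  have h0 := MvPolynomial.psum_eq_mul_esymm_sub_sum σ ℂ n h
  have h1 := congrArg (MvPolynomial.aeval f) h0
  simpa only [map_sub, map_mul, map_pow, map_sum, map_neg, map_one, map_natCast,
    MvPolynomial.aeval_esymm_eq_multiset_esymm, MvPolynomial.psum, MvPolynomial.aeval_X] using h1

lemma newton_range (k : ℕ) (n : ℕ) (h : 0 < n) :
    ∑ j ∈ Finset.range k, ww k j ^ n
      = (-1) ^ (n + 1) * n * (((Finset.range k).val.map (ww k)).esymm n)
      - ∑ a ∈ (Finset.HasAntidiagonal.antidiagonal n).filter (fun a => a.1 ∈ Set.Ioo 0 n),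
          (-1) ^ a.1 * (((Finset.range k).val.map (ww k)).esymm a.1)
            * ∑ j ∈ Finset.range k, ww k j ^ a.2 := by
  have hme : ((Finset.univ : Finset (Fin k)).val.map (fun i : Fin k => ww k i.val))
      = (Finset.range k).val.map (ww k) := by
    have : (Finset.range k) = (Finset.univ : Finset (Fin k)).map Fin.valEmbedding := by
      rw [Fin.map_valEmbedding_univ]
      ext x; simp
    rw [this, Finset.map_val, Multiset.map_map]
    rfl
  have h0 := newton_eval (fun i : Fin k => ww k i.val) n h
  rw [hme] at h0
  simp only [← Fin.sum_univ_eq_sum_range] 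
  exact h0

lemma cast_choose_three (n : ℕ) : ((n.choose 3 : ℕ) : ℂ) = n * (n - 1) * (n - 2) / 6 := by
  induction n with
  | zero => norm_num
  | succ n ih =>
    rw [Nat.choose_succ_succ n 2]
    push_cast
    rw [ih, Nat.cast_choose_two]
    push_cast
    ring

lemma cast_choose_four (n : ℕ) : ((n.choose 4 : ℕ) : ℂ) = n * (n - 1) * (n - 2) * (n - 3) / 24 := by
  induction n with
  | zero => norm_num
  | succ n ih =>
    rw [Nat.choose_succ_succ n 3]
    push_cast
    rw [ih, cast_choose_three]
    push_cast
    ring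

lemma tan_eq (k : ℕ) (hk : Odd k) (hk0 : 0 < k) (j : ℕ) :
    Complex.tan ((Real.pi : ℂ) * j / k) ^ 4 = (1 - 2 * ww k j) ^ 4 := by
  have hE : Complex.exp (((Real.pi : ℂ) * j / k) * Complex.I) ^ 2 = zz k ^ j := by
    rw [← Complex.exp_nat_mul, zz, ← Complex.exp_nat_mul]
    congr 1
    have hk' : (k : ℂ) ≠ 0 := by exact_mod_cast hk0.ne'
    push_cast
    field_simp
  set E := Complex.exp (((Real.pi : ℂ) * j / k) * Complex.I) with hEdef
  have hE0 : E ≠ 0 := Complex.exp_ne_zero _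
  have hne : 1 + E ^ 2 ≠ 0 := by rw [hE]; exact one_add_zz_ne hk hk0 j
  rw [Complex.tan_eq_sin_div_cos, Complex.sin, Complex.cos, ww, ← hE,
    neg_mul, Complex.exp_neg, ← hEdef]
  have hI : Complex.I ^ 4 = 1 := by
    rw [show (4:ℕ) = 2*2 from rfl, pow_mul, Complex.I_sq]; norm_num
  have hb : (E⁻¹ - E) * Complex.I / 2 / ((E + E⁻¹) / 2) = Complex.I * ((1 - E ^ 2) / (1 + E ^ 2)) := by
    rw [show E + E⁻¹ = (1 + E ^ 2) / E by field_simp; ring, show E⁻¹ - E = (1 - E ^ 2) / E by field_simp]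
    field_simp
  have hc : (1 : ℂ) - 2 * (1 + E ^ 2)⁻¹ = -((1 - E ^ 2) / (1 + E ^ 2)) := by
    field_simp
    ring
  rw [hb, hc, mul_pow, hI, one_mul]
  ring

open Real in
theorem sum_tan_pow_four (k : ℕ) (hk : Odd k) (hk0 : 0 < k) :
    ∑ j ∈ Finset.range k, Real.tan (π * j / k) ^ 4 =
    (k : ℝ) * ((k : ℝ) - 1) * ((k : ℝ) ^ 2 + k - 3) / 3 := by
  have h1 := newton_range k 1 one_pos
  have h2 := newton_range k 2 two_pos
  have h3 := newton_range k 3 three_pos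
  have h4 := newton_range k 4 four_pos
  have hf1 : (Finset.HasAntidiagonal.antidiagonal 1).filter (fun a => a.1 ∈ Set.Ioo 0 1) = ∅ := by
    ext a
    simp only [Finset.mem_filter, Finset.HasAntidiagonal.mem_antidiagonal, Set.mem_Ioo, Finset.notMem_empty,
      iff_false, not_and]
    omega
  have hf2 : (Finset.HasAntidiagonal.antidiagonal 2).filter (fun a => a.1 ∈ Set.Ioo 0 2) = {((1:ℕ),(1:ℕ))} := by
    ext a
    simp only [Finset.mem_filter, Finset.HasAntidiagonal.mem_antidiagonal, Set.mem_Ioo,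
      Finset.mem_singleton, Prod.ext_iff]
    omega
  have hf3 : (Finset.HasAntidiagonal.antidiagonal 3).filter (fun a => a.1 ∈ Set.Ioo 0 3)
      = {((1:ℕ),(2:ℕ)), ((2:ℕ),(1:ℕ))} := by
    ext a
    simp only [Finset.mem_filter, Finset.HasAntidiagonal.mem_antidiagonal, Set.mem_Ioo,
      Finset.mem_insert, Finset.mem_singleton, Prod.ext_iff]
    omega
  have hf4 : (Finset.HasAntidiagonal.antidiagonal 4).filter (fun a => a.1 ∈ Set.Ioo 0 4)
      = {((1:ℕ),(3:ℕ)), ((2:ℕ),(2:ℕ)), ((3:ℕ),(1:ℕ))} := by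
    ext a
    simp only [Finset.mem_filter, Finset.HasAntidiagonal.mem_antidiagonal, Set.mem_Ioo,
      Finset.mem_insert, Finset.mem_singleton, Prod.ext_iff]
    omega
  rw [hf1, Finset.sum_empty] at h1
  rw [hf2, Finset.sum_singleton] at h2
  rw [hf3, Finset.sum_insert (by decide), Finset.sum_singleton] at h3
  rw [hf4, Finset.sum_insert (by decide), Finset.sum_insert (by decide),
    Finset.sum_singleton] at h4
  have he1 := esymm_ww hk hk0 1 le_rfl
  have he2 := esymm_ww hk hk0 2 (by norm_num)
  have he3 := esymm_ww hk hk0 3 (by norm_num)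
  have he4 := esymm_ww hk hk0 4 (by norm_num)
  have hc1 : ((k.choose 1 : ℕ) : ℂ) = k := by rw [Nat.choose_one_right]
  have hc2 : ((k.choose 2 : ℕ) : ℂ) = k * (k - 1) / 2 := Nat.cast_choose_two (K := ℂ) k
  have hc3 := cast_choose_three k
  have hc4 := cast_choose_four k
  norm_num at h1 h2 h3 h4
  simp only [Finset.range_val] at he1 he2 he3 he4
  rw [hc1] at he1
  rw [hc2] at he2
  rw [hc3] at he3
  rw [hc4] at he4
  simp only [he1, he2, he3, he4] at h1 h2 h3 h4
  -- now cast the goal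
  have hsum : ((∑ j ∈ Finset.range k, Real.tan (π * j / k) ^ 4 : ℝ) : ℂ)
      = ∑ j ∈ Finset.range k, (1 - 2 * ww k j) ^ 4 := by
    push_cast
    exact Finset.sum_congr rfl fun j _ => tan_eq k hk hk0 j
  have hexp : ∑ j ∈ Finset.range k, ((1:ℂ) - 2 * ww k j) ^ 4
      = (k : ℂ) - 8 * (∑ j ∈ Finset.range k, ww k j)
        + 24 * (∑ j ∈ Finset.range k, ww k j ^ 2)
        - 32 * (∑ j ∈ Finset.range k, ww k j ^ 3)
        + 16 * (∑ j ∈ Finset.range k, ww k j ^ 4) := by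
    calc ∑ j ∈ Finset.range k, ((1:ℂ) - 2 * ww k j) ^ 4
        = ∑ j ∈ Finset.range k,
            ((1:ℂ) - 8 * ww k j + 24 * ww k j ^ 2 - 32 * ww k j ^ 3 + 16 * ww k j ^ 4) :=
          Finset.sum_congr rfl fun j _ => by ring
      _ = _ := by
          simp only [Finset.sum_add_distrib, Finset.sum_sub_distrib, ← Finset.mul_sum,
            Finset.sum_const, Finset.card_range, nsmul_eq_mul, mul_one]
  apply Complex.ofReal_injective
  rw [hsum, hexp, h4, h3, h2, h1]
  push_cast
  ring
end

section
/- For positive integers a, b, k with 0 < ab < k, and any real x, the sum over j from 0 to k-1 of sin^(2a)(bπj/k + x) equals (k/4^a)·C(2a, a). -/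
open Finset Real

theorem sum_sin_even_pow (a b k : ℕ) (ha : 0 < a) (hb : 0 < b) (hab : a * b < k) (x : ℝ) :
    ∑ j ∈ Finset.range k, Real.sin (b * π * j / k + x) ^ (2 * a) =
    (k : ℝ) / 4 ^ a * Nat.choose (2 * a) a := by
  have hk : 0 < k := (Nat.mul_pos ha hb).trans hab
  have hkc : (k : ℂ) ≠ 0 := by exact_mod_cast hk.ne'
  apply Complex.ofReal_injective
  push_cast [Complex.ofReal_sin]
  have expand : ∀ z : ℂ, Complex.sin z ^ (2 * a) =
      ∑ m ∈ Finset.range (2 * a + 1),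
        (-1 : ℂ) ^ (m + a) * (Nat.choose (2 * a) m) / 4 ^ a *
          Complex.exp (((2 * (a : ℤ) - 2 * (m : ℤ) : ℤ) : ℂ) * z * Complex.I) := by
    intro z
    rw [Complex.sin, div_pow, mul_pow, sub_pow, Finset.sum_mul, Finset.sum_div]
    refine Finset.sum_congr rfl fun m hm => ?_
    have hm' : m ≤ 2 * a := by simpa using Nat.lt_succ_iff.mp (Finset.mem_range.mp hm)
    have hI : (Complex.I : ℂ) ^ (2 * a) = (-1) ^ a := by
      rw [pow_mul, Complex.I_sq]
    have h2 : ((2 : ℂ)) ^ (2 * a) = 4 ^ a := by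
      rw [pow_mul]; norm_num
    have hprod : Complex.exp (-z * Complex.I) ^ m * Complex.exp (z * Complex.I) ^ (2 * a - m)
        = Complex.exp (((2 * (a : ℤ) - 2 * (m : ℤ) : ℤ) : ℂ) * z * Complex.I) := by
      rw [← Complex.exp_nat_mul, ← Complex.exp_nat_mul, ← Complex.exp_add]
      congr 1
      push_cast [Nat.cast_sub hm']
      ring
    have hsgn : ((-1 : ℂ)) ^ (m + 2 * a) = (-1) ^ m := by
      rw [pow_add, pow_mul]; norm_num
    rw [hI, h2, ← hprod, hsgn]
    have hsgn2 : ((-1 : ℂ)) ^ (m + a) = (-1) ^ m * (-1) ^ a := pow_add _ _ _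
    rw [hsgn2]
    ring
  simp_rw [expand]
  rw [Finset.sum_comm]
  have key : ∀ m ∈ Finset.range (2 * a + 1),
      (∑ j ∈ Finset.range k,
        (-1 : ℂ) ^ (m + a) * (Nat.choose (2 * a) m) / 4 ^ a *
          Complex.exp (((2 * (a : ℤ) - 2 * (m : ℤ) : ℤ) : ℂ) * ((b : ℂ) * (π : ℂ) * (j : ℂ) / (k : ℂ) + (x : ℂ)) * Complex.I))
      = if m = a then (k : ℂ) / 4 ^ a * Nat.choose (2 * a) a else 0 := by
    intro m hm
    have hm' : m ≤ 2 * a := by simpa using Nat.lt_succ_iff.mp (Finset.mem_range.mp hm)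
    set t : ℤ := 2 * (a : ℤ) - 2 * (m : ℤ) with ht
    set r : ℂ := Complex.exp ((t : ℂ) * b * (π : ℂ) * Complex.I / k) with hr
    have hsplit : ∀ j : ℕ, Complex.exp ((t : ℂ) * ((b : ℂ) * (π : ℂ) * (j : ℂ) / (k : ℂ) + (x : ℂ)) * Complex.I)
        = Complex.exp ((t : ℂ) * x * Complex.I) * r ^ j := by
      intro j
      rw [hr, ← Complex.exp_nat_mul, ← Complex.exp_add]
      congr 1
      field_simp
      ring
    simp_rw [hsplit, ← mul_assoc, ← Finset.mul_sum]
    by_cases hma : m = a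
    · subst hma
      have ht0 : t = 0 := by omega
      have hr1 : r = 1 := by rw [hr, ht0]; norm_num
      have hsgn : ((-1 : ℂ)) ^ (m + m) = 1 := by
        rw [← two_mul, pow_mul]; norm_num
      rw [hr1, ht0, hsgn]
      simp
      ring
    · have hπ : ((π : ℝ) : ℂ) ≠ 0 := by exact_mod_cast Real.pi_ne_zero
      have hrk : r ^ k = 1 := by
        rw [hr, ← Complex.exp_nat_mul]
        have harg : (k : ℂ) * ((t : ℂ) * b * (π : ℂ) * Complex.I / k)
            = (((a : ℤ) - m) * b : ℤ) * (2 * (π : ℂ) * Complex.I) := by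
          field_simp
          push_cast [ht]
          ring
        rw [harg, Complex.exp_int_mul_two_pi_mul_I]
      have hrne : r ≠ 1 := by
        intro h
        rw [hr, Complex.exp_eq_one_iff] at h
        obtain ⟨n, hn⟩ := h
        have hPI : (π : ℂ) * Complex.I ≠ 0 := mul_ne_zero hπ Complex.I_ne_zero
        have h1 : ((t * b : ℤ) : ℂ) * ((π : ℂ) * Complex.I)
            = ((2 * n * k : ℤ) : ℂ) * ((π : ℂ) * Complex.I) := by
          field_simp at hn
          push_cast
          linear_combination ((π : ℂ) * Complex.I) * hn
        have h2 : (t * b : ℤ) = 2 * n * k := by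
          exact_mod_cast mul_right_cancel₀ hPI h1
        have h3 : ((a : ℤ) - m) * b = n * k := by
          rw [ht] at h2; linarith
        have hbz : (b : ℤ) ≠ 0 := by exact_mod_cast hb.ne'
        have hamz : (a : ℤ) - m ≠ 0 := by
          intro h; apply hma; omega
        have habs : |((a : ℤ) - m) * b| < k := by
          rw [abs_mul]
          have h4 : |(a : ℤ) - m| ≤ a := by
            rw [abs_le]; constructor <;> omega
          have h5 : |(b : ℤ)| = b := abs_of_nonneg (by positivity)
          calc |(a : ℤ) - m| * |(b : ℤ)| ≤ a * b := by
                rw [h5]; exact mul_le_mul_of_nonneg_right h4 (by positivity)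
            _ < k := by exact_mod_cast hab
        rcases eq_or_ne n 0 with h0 | h0
        · rw [h0, zero_mul] at h3
          rcases mul_eq_zero.mp h3 with h | h
          · exact hamz h
          · exact hbz h
        · have : (k : ℤ) ≤ |n * k| := by
            rw [abs_mul, abs_of_nonneg (by positivity : (0:ℤ) ≤ (k:ℤ))]
            nlinarith [Int.one_le_abs h0]
          rw [← h3] at this
          omega
      have hgeom : ∑ j ∈ Finset.range k, r ^ j = 0 := by
        rw [geom_sum_eq hrne, hrk, sub_self, zero_div]
      rw [hgeom, mul_zero]
      simp [hma]
  rw [Finset.sum_congr rfl key, Finset.sum_ite_eq' (Finset.range (2 * a + 1)) a]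
  rw [if_pos (Finset.mem_range.mpr (by omega))]
end

section
/- For every positive integer a, the sum over m from 0 to a of (−1)^m · 4^(a−m) · C(2m, m) · C(a, m) equals C(2a, a). -/
open Finset

private def ff (n k : ℕ) : ℤ :=
  (-1 : ℤ) ^ k * 4 ^ (n - k) * Nat.choose (2 * k) k * Nat.choose n k

private def hh (n k : ℕ) : ℤ :=
  -(k ^ 2 : ℤ) * (-1) ^ k * 4 ^ (n + 1 - k) * Nat.choose (2 * k) k * Nat.choose (n + 1) k

private lemma key (n k : ℕ) :
    ((n : ℤ) + 1) ^ 2 * ff (n + 1) k - 2 * (2 * n + 1) * ((n : ℤ) + 1) * ff n k =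
      hh n (k + 1) - hh n k := by
  rcases lt_trichotomy k (n + 1) with hk | hk | hk
  · -- k ≤ n
    have hk' : k ≤ n := by omega
    have e1n := Nat.succ_mul_centralBinom_succ k
    simp only [Nat.centralBinom] at e1n
    have e1 : ((k : ℤ) + 1) * Nat.choose (2 * (k + 1)) (k + 1)
        = 2 * (2 * k + 1) * Nat.choose (2 * k) k := by exact_mod_cast e1n
    have e2n := Nat.add_one_mul_choose_eq n k
    have e2 : ((n : ℤ) + 1) * Nat.choose n k
        = Nat.choose (n + 1) (k + 1) * ((k : ℤ) + 1) := by exact_mod_cast e2n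
    have e3n := Nat.choose_mul_succ_eq n k
    have hsub : ((n + 1 - k : ℕ) : ℤ) = (n : ℤ) + 1 - k := by omega
    have e3 : (Nat.choose n k : ℤ) * ((n : ℤ) + 1)
        = (Nat.choose (n + 1) k : ℤ) * ((n : ℤ) + 1 - k) := by
      rw [← hsub]; exact_mod_cast e3n
    have e12 : ((k : ℤ) + 1) ^ 2 * Nat.choose (2 * (k + 1)) (k + 1) * Nat.choose (n + 1) (k + 1)
        = 2 * (2 * k + 1) * ((n : ℤ) + 1) * Nat.choose (2 * k) k * Nat.choose n k := by
      linear_combination ((k : ℤ) + 1) * (Nat.choose (n + 1) (k + 1) : ℤ) * e1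
        - 2 * (2 * (k : ℤ) + 1) * (Nat.choose (2 * k) k : ℤ) * e2
    have r1 : n + 1 - k = (n - k) + 1 := by omega
    have r2 : n + 1 - (k + 1) = n - k := by omega
    simp only [ff, hh, r1, r2, pow_succ]
    push_cast
    linear_combination (-((-1 : ℤ) ^ k * 4 ^ (n - k))) * e12
      - 4 * ((n : ℤ) + 1 + k) * (Nat.choose (2 * k) k : ℤ) * ((-1 : ℤ) ^ k * 4 ^ (n - k)) * e3
  · -- k = n + 1
    subst hk
    simp only [ff, hh, Nat.sub_self, Nat.choose_self, Nat.choose_succ_self,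
      Nat.add_sub_cancel_left, Nat.add_sub_cancel]
    push_cast
    ring
  · -- k ≥ n + 2
    have h1 : Nat.choose (n + 1) k = 0 := Nat.choose_eq_zero_of_lt (by omega)
    have h2 : Nat.choose n k = 0 := Nat.choose_eq_zero_of_lt (by omega)
    have h3 : Nat.choose (n + 1) (k + 1) = 0 := Nat.choose_eq_zero_of_lt (by omega)
    simp [ff, hh, h1, h2, h3]

private lemma sum_ff (n : ℕ) :
    ∑ m ∈ Finset.range (n + 1), ff n m = Nat.choose (2 * n) n := by
  induction n with
  | zero => simp [ff]
  | succ n ih =>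
    have hsum := Finset.sum_congr rfl (fun k (_ : k ∈ Finset.range (n + 2)) => key n k)
    rw [Finset.sum_sub_distrib] at hsum
    have htel : ∑ k ∈ Finset.range (n + 2), (hh n (k + 1) - hh n k) = hh n (n + 2) - hh n 0 :=
      Finset.sum_range_sub (hh n) (n + 2)
    have hz : hh n (n + 2) - hh n 0 = 0 := by
      have h3 : Nat.choose (n + 1) (n + 2) = 0 := Nat.choose_eq_zero_of_lt (by omega)
      simp [hh, h3]
    have hffn : ∑ k ∈ Finset.range (n + 2), ff n k = Nat.choose (2 * n) n := by
      rw [Finset.sum_range_succ, ih]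
      have : Nat.choose n (n + 1) = 0 := Nat.choose_eq_zero_of_lt (by omega)
      simp [ff, this]
    have hmain : ((n : ℤ) + 1) ^ 2 * ∑ k ∈ Finset.range (n + 2), ff (n + 1) k
        = ((n : ℤ) + 1) ^ 2 * Nat.choose (2 * (n + 1)) (n + 1) := by
      have hkeysum : ∑ k ∈ Finset.range (n + 2),
          (((n : ℤ) + 1) ^ 2 * ff (n + 1) k - 2 * (2 * n + 1) * ((n : ℤ) + 1) * ff n k)
          = 0 := by
        rw [Finset.sum_congr rfl (fun k _ => key n k), htel, hz]
      rw [Finset.sum_sub_distrib, ← Finset.mul_sum, ← Finset.mul_sum, sub_eq_zero] at hkeysum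
      rw [hkeysum, hffn]
      have e1n := Nat.succ_mul_centralBinom_succ n
      simp only [Nat.centralBinom] at e1n
      have e1 : ((n : ℤ) + 1) * Nat.choose (2 * (n + 1)) (n + 1)
          = 2 * (2 * n + 1) * Nat.choose (2 * n) n := by exact_mod_cast e1n
      linear_combination (-((n : ℤ) + 1)) * e1
    have hne : ((n : ℤ) + 1) ^ 2 ≠ 0 := by positivity
    exact mul_left_cancel₀ hne hmain

theorem binom_alt_sum (a : ℕ) (ha : 0 < a) :
    ∑ m ∈ Finset.range (a + 1),
      ((-1 : ℤ) ^ m * 4 ^ (a - m) * Nat.choose (2 * m) m * Nat.choose a m) =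
    Nat.choose (2 * a) a := by
  exact sum_ff a
end
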